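/- arXiv:math/0407456 — 5 statements merged into one kernel-verified Lean document; each statement's English description precedes it below -/
import Mathlib

section
/- For a finite tree A with b-coloring (B, R, G), every maximum matching of A contains all edges of R and, for each vertex b of B, exactly one edge joining b to a vertex of G, and no other edges; hence every maximum matching of A has cardinality |B| + |R|. -/
set_option linter.unusedSectionVars false
open SimpleGraph
variable {V : Type*} [Fintype V] [DecidableEq V]

/-- `C` is a vertex cover of `A`. -/
def IsVC (A : SimpleGraph V) (C : Set V) : Prop :=
  ∀ e ∈ A.edgeSet, ∃ v ∈ C, v ∈ e

/-- `C` is a minimum vertex cover of `A`. -/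
def IsMinVC (A : SimpleGraph V) (C : Set V) : Prop :=
  IsVC A C ∧ ∀ D : Set V, IsVC A D → C.ncard ≤ D.ncard

/-- `M` is a matching of `A`: a set of edges, pairwise non-adjacent. -/
def IsMatch (A : SimpleGraph V) (M : Set (Sym2 V)) : Prop :=
  M ⊆ A.edgeSet ∧ ∀ e ∈ M, ∀ f ∈ M, e ≠ f → ∀ v : V, ¬(v ∈ e ∧ v ∈ f)

/-- `M` is a maximum matching of `A`. -/
def IsMaxMatch (A : SimpleGraph V) (M : Set (Sym2 V)) : Prop :=
  IsMatch A M ∧ ∀ N : Set (Sym2 V), IsMatch A N → N.ncard ≤ M.ncard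

/-- endpoints of a set of edges -/
def Rsupp (R : Set (Sym2 V)) : Set V := {v | ∃ e ∈ R, v ∈ e}

/-- the tricoloring conditions (iii) of the paper -/
def IsBColoring (A : SimpleGraph V) (B : Set V) (R : Set (Sym2 V)) (G : Set V) : Prop :=
  R ⊆ A.edgeSet ∧
  B ∪ G ∪ Rsupp R = Set.univ ∧
  Disjoint B G ∧ Disjoint B (Rsupp R) ∧ Disjoint G (Rsupp R) ∧
  (∀ e ∈ R, ∀ f ∈ R, e ≠ f → ∀ v : V, ¬(v ∈ e ∧ v ∈ f)) ∧
  (∀ v w : V, A.Adj v w → v ∈ G → w ∈ B) ∧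
  (∀ b ∈ B, 2 ≤ (A.neighborSet b ∩ G).ncard)

/-- positive vertex-cover backbone -/
def PosBB (A : SimpleGraph V) : Set V := {v | ∀ C : Set V, IsMinVC A C → v ∈ C}

/-- negative vertex-cover backbone -/
def NegBB (A : SimpleGraph V) : Set V := {v | ∀ C : Set V, IsMinVC A C → v ∉ C}

/-- degenerate vertex -/
def Degen (A : SimpleGraph V) (v : V) : Prop :=
  (∃ C : Set V, IsMinVC A C ∧ v ∈ C) ∧ (∃ C : Set V, IsMinVC A C ∧ v ∉ C)

/-- exclusive edge -/
def Exclusive (A : SimpleGraph V) (e : Sym2 V) : Prop :=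
  e ∈ A.edgeSet ∧ (∀ v ∈ e, Degen A v) ∧
  ∀ C : Set V, IsMinVC A C → ∃ v ∈ e, v ∉ C


noncomputable def farV (A : SimpleGraph V) (r : V) (e : Sym2 V) : V :=
  if A.dist (Quot.out e).1 r ≤ A.dist (Quot.out e).2 r then (Quot.out e).2 else (Quot.out e).1

noncomputable def nearV (A : SimpleGraph V) (r : V) (e : Sym2 V) : V :=
  if A.dist (Quot.out e).1 r ≤ A.dist (Quot.out e).2 r then (Quot.out e).1 else (Quot.out e).2

theorem near_far_eq (A : SimpleGraph V) (r : V) (e : Sym2 V) :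
    s(nearV A r e, farV A r e) = e := by
  rw [nearV, farV]
  split_ifs
  · exact e.out_eq
  · rw [Sym2.eq_swap]; exact e.out_eq

theorem far_mem (A : SimpleGraph V) (r : V) (e : Sym2 V) : farV A r e ∈ e := by
  have h : farV A r e ∈ s(nearV A r e, farV A r e) := Sym2.mem_mk_right _ _
  rwa [near_far_eq] at h

theorem near_mem (A : SimpleGraph V) (r : V) (e : Sym2 V) : nearV A r e ∈ e := by
  have h : nearV A r e ∈ s(nearV A r e, farV A r e) := Sym2.mem_mk_left _ _
  rwa [near_far_eq] at h

theorem mem_near_or_far (A : SimpleGraph V) (r : V) {e : Sym2 V} {x : V} (hx : x ∈ e) :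
    x = nearV A r e ∨ x = farV A r e := by
  rw [← near_far_eq A r e] at hx
  simpa using hx

theorem near_ne_far {A : SimpleGraph V} (r : V) {e : Sym2 V} (he : e ∈ A.edgeSet) :
    nearV A r e ≠ farV A r e := by
  intro h
  apply A.not_isDiag_of_mem_edgeSet he
  rw [← near_far_eq A r e, h]
  exact Sym2.mk_isDiag_iff.2 rfl

theorem adj_near_far {A : SimpleGraph V} (r : V) {e : Sym2 V} (he : e ∈ A.edgeSet) :
    A.Adj (nearV A r e) (farV A r e) := by
  rw [← A.mem_edgeSet, near_far_eq A r e]; exact he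

theorem tree_path_length {A : SimpleGraph V} (hA : A.IsTree) {r v : V} {p : A.Walk v r}
    (hp : p.IsPath) : p.length = A.dist v r := by
  obtain ⟨q, hq, hql⟩ := hA.isConnected.exists_path_of_dist v r
  rw [(hA.existsUnique_path v r).unique hp hq, hql]

theorem tree_dist_succ {A : SimpleGraph V} (hA : A.IsTree) (r : V) {x y : V} (h : A.Adj x y) :
    A.dist x r = A.dist y r + 1 ∨ A.dist y r = A.dist x r + 1 := by
  obtain ⟨p, hp, hpl⟩ := hA.isConnected.exists_path_of_dist x r
  by_cases hy : y ∈ p.support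
  · left
    have hq : (p.dropUntil y hy).IsPath := hp.dropUntil hy
    have hql : (p.dropUntil y hy).length = A.dist y r := tree_path_length hA hq
    have hsp := p.take_spec hy
    have := congrArg SimpleGraph.Walk.length hsp
    rw [SimpleGraph.Walk.length_append] at this
    have h1 : 1 ≤ (p.takeUntil y hy).length := by
      rcases Nat.eq_zero_or_pos (p.takeUntil y hy).length with h0 | h0
      · exact absurd (SimpleGraph.Walk.eq_of_length_eq_zero h0) h.ne
      · exact h0
    have htr : A.dist x r ≤ A.dist y r + 1 := by
      calc A.dist x r ≤ A.dist x y + A.dist y r := hA.isConnected.dist_triangle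
        _ = 1 + A.dist y r := by rw [SimpleGraph.dist_eq_one_iff_adj.2 h]
        _ = A.dist y r + 1 := by omega
    omega
  · right
    have hq : (SimpleGraph.Walk.cons h.symm p).IsPath := by
      rw [SimpleGraph.Walk.cons_isPath_iff]; exact ⟨hp, hy⟩
    have := tree_path_length hA hq
    rw [SimpleGraph.Walk.length_cons] at this
    omega

theorem dist_far {A : SimpleGraph V} (hA : A.IsTree) (r : V) {e : Sym2 V} (he : e ∈ A.edgeSet) :
    A.dist (farV A r e) r = A.dist (nearV A r e) r + 1 := by
  have hadj := adj_near_far r he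
  rcases tree_dist_succ hA r hadj with h | h
  · -- dist near = dist far + 1 : contradiction with definition
    exfalso
    rw [nearV, farV] at h
    split_ifs at h <;> omega
  · exact h
theorem far_spec {A : SimpleGraph V} (hA : A.IsTree) (r : V) {e : Sym2 V} (he : e ∈ A.edgeSet)
    {x y : V} (hxy : e = s(x, y)) (hd : A.dist x r = A.dist y r + 1) : farV A r e = x := by
  have hx : x ∈ e := by rw [hxy]; exact Sym2.mem_mk_left _ _
  have hy : y ∈ e := by rw [hxy]; exact Sym2.mem_mk_right _ _
  have hdf := dist_far hA r he
  rcases mem_near_or_far A r hx with h1 | h1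
  · rcases mem_near_or_far A r hy with h2 | h2
    · exfalso; rw [h1, h2] at hd; omega
    · exfalso; rw [h1, h2, hdf] at hd; omega
  · exact h1.symm

theorem far_inj {A : SimpleGraph V} (hA : A.IsTree) (r : V) {e f : Sym2 V}
    (he : e ∈ A.edgeSet) (hf : f ∈ A.edgeSet) (hef : farV A r e = farV A r f) : e = f := by
  by_cases hnn : nearV A r e = nearV A r f
  · rw [← near_far_eq A r e, ← near_far_eq A r f, hnn, hef]
  · exfalso
    have hde := dist_far hA r he
    have hdf := dist_far hA r hf
    rw [← hef] at hdf
    obtain ⟨p, hp, hpl⟩ := hA.isConnected.exists_path_of_dist (nearV A r e) r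
    obtain ⟨q, hq, hql⟩ := hA.isConnected.exists_path_of_dist (nearV A r f) r
    have hvp : farV A r e ∉ p.support := by
      intro hmem
      have h1 : (p.dropUntil _ hmem).length = A.dist (farV A r e) r :=
        tree_path_length hA (hp.dropUntil hmem)
      have h2 := SimpleGraph.Walk.length_dropUntil_le p hmem
      rw [h1, hpl] at h2
      omega
    have hvq : farV A r e ∉ q.support := by
      intro hmem
      have h1 : (q.dropUntil _ hmem).length = A.dist (farV A r e) r :=
        tree_path_length hA (hq.dropUntil hmem)
      have h2 := SimpleGraph.Walk.length_dropUntil_le q hmem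
      rw [h1, hql] at h2
      omega
    have hadj1 : A.Adj (farV A r e) (nearV A r e) := (adj_near_far r he).symm
    have hadj2 : A.Adj (farV A r e) (nearV A r f) := by
      rw [hef]; exact (adj_near_far r hf).symm
    have hp1 : (SimpleGraph.Walk.cons hadj1 p).IsPath := by
      rw [SimpleGraph.Walk.cons_isPath_iff]; exact ⟨hp, hvp⟩
    have hp2 : (SimpleGraph.Walk.cons hadj2 q).IsPath := by
      rw [SimpleGraph.Walk.cons_isPath_iff]; exact ⟨hq, hvq⟩
    have heq := (hA.existsUnique_path (farV A r e) r).unique hp1 hp2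
    have hsup := congrArg SimpleGraph.Walk.support heq
    rw [SimpleGraph.Walk.support_cons, SimpleGraph.Walk.support_cons] at hsup
    have htl := List.tail_eq_of_cons_eq hsup
    rw [p.support_eq_cons, q.support_eq_cons] at htl
    exact hnn (List.head_eq_of_cons_eq htl)
theorem sym2_out (f : Sym2 V) : f = s((Quot.out f).1, (Quot.out f).2) := by
  conv_lhs => rw [← Quot.out_eq f]

theorem cover_covers {A : SimpleGraph V} (hA : A.IsTree) {B : Set V} {R : Set (Sym2 V)}
    {G : Set V} (hBC : IsBColoring A B R G) (r : V) :
    ∀ f ∈ A.edgeSet, ∃ v ∈ B ∪ (nearV A r) '' R, v ∈ f := by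
  obtain ⟨hRE, hUniv, hBG, hBR, hGR, hRM, hGadj, hBdeg⟩ := hBC
  intro f hf
  obtain ⟨x, y, rfl⟩ : ∃ x y, f = s(x, y) := ⟨_, _, sym2_out f⟩
  have hadj : A.Adj x y := hf
  have hmemx : x ∈ s(x, y) := Sym2.mem_mk_left _ _
  have hmemy : y ∈ s(x, y) := Sym2.mem_mk_right _ _
  have hpart : ∀ v : V, v ∈ B ∨ v ∈ G ∨ v ∈ Rsupp R := by
    intro v
    have hv : v ∈ B ∪ G ∪ Rsupp R := hUniv ▸ Set.mem_univ v
    rcases hv with (hv | hv) | hv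
    · exact Or.inl hv
    · exact Or.inr (Or.inl hv)
    · exact Or.inr (Or.inr hv)
  rcases hpart x with hx | hx | hx
  · exact ⟨x, Or.inl hx, hmemx⟩
  · exact ⟨y, Or.inl (hGadj x y hadj hx), hmemy⟩
  rcases hpart y with hy | hy | hy
  · exact ⟨y, Or.inl hy, hmemy⟩
  · exact ⟨x, Or.inl (hGadj y x hadj.symm hy), hmemx⟩
  obtain ⟨e₁, he₁R, hxe₁⟩ := hx
  obtain ⟨e₂, he₂R, hye₂⟩ := hy
  by_cases h12 : e₁ = e₂
  · -- f = e₁ ∈ R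
    subst h12
    have hfe : e₁ = s(x, y) := ((Sym2.mem_and_mem_iff hadj.ne).mp ⟨hxe₁, hye₂⟩)
    exact ⟨nearV A r e₁, Or.inr ⟨e₁, he₁R, rfl⟩, hfe ▸ near_mem A r e₁⟩
  · rcases mem_near_or_far A r hxe₁ with hx1 | hx1
    · exact ⟨nearV A r e₁, Or.inr ⟨e₁, he₁R, rfl⟩, hx1 ▸ hmemx⟩
    rcases mem_near_or_far A r hye₂ with hy2 | hy2
    · exact ⟨nearV A r e₂, Or.inr ⟨e₂, he₂R, rfl⟩, hy2 ▸ hmemy⟩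
    exfalso
    rcases tree_dist_succ hA r hadj with hd | hd
    · have h1 : farV A r s(x, y) = x := far_spec hA r hf rfl hd
      have h2 : s(x, y) = e₁ := far_inj hA r hf (hRE he₁R) (by rw [h1, hx1])
      exact hRM e₁ he₁R e₂ he₂R h12 y ⟨h2 ▸ hmemy, hye₂⟩
    · have h1 : farV A r s(x, y) = y := far_spec hA r hf (Sym2.eq_swap) hd
      have h2 : s(x, y) = e₂ := far_inj hA r hf (hRE he₂R) (by rw [h1, hy2])
      exact hRM e₁ he₁R e₂ he₂R h12 x ⟨hxe₁, h2 ▸ hmemx⟩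
theorem near_injOn {A : SimpleGraph V} {B : Set V} {R : Set (Sym2 V)} {G : Set V}
    (hBC : IsBColoring A B R G) (r : V) : Set.InjOn (nearV A r) R := by
  intro e he f hf hef
  by_contra hne
  exact hBC.2.2.2.2.2.1 e he f hf hne (nearV A r e) ⟨near_mem A r e, hef ▸ near_mem A r f⟩

theorem cover_ncard {A : SimpleGraph V} {B : Set V} {R : Set (Sym2 V)} {G : Set V}
    (hBC : IsBColoring A B R G) (r : V) :
    (B ∪ (nearV A r) '' R).ncard = B.ncard + R.ncard := by
  have hsub : (nearV A r) '' R ⊆ Rsupp R := by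
    rintro v ⟨e, he, rfl⟩
    exact ⟨e, he, near_mem A r e⟩
  have hdisj : Disjoint B ((nearV A r) '' R) :=
    (hBC.2.2.2.1.mono_right hsub)
  rw [Set.ncard_union_eq hdisj B.toFinite (Set.toFinite _),
    Set.ncard_image_of_injOn (near_injOn hBC r)]

theorem cover_exact [Nonempty V] {A : SimpleGraph V} {M : Set (Sym2 V)} (hM : IsMatch A M)
    {C : Set V} (hC : ∀ f ∈ A.edgeSet, ∃ v ∈ C, v ∈ f) :
    M.ncard ≤ C.ncard ∧
    (M.ncard = C.ncard →
      (∀ v ∈ C, ∃ e ∈ M, v ∈ e) ∧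
      (∀ e ∈ M, ∀ v w, v ∈ e → w ∈ e → v ∈ C → w ∈ C → v = w)) := by
  classical
  inhabit V
  have hch : ∀ e ∈ M, ∃ v ∈ C, v ∈ e := fun e he => hC e (hM.1 he)
  choose! φ hφC hφe using hch
  have hinj : Set.InjOn φ M := by
    intro e he f hf hef
    by_contra hne
    exact hM.2 e he f hf hne (φ e) ⟨hφe e he, hef ▸ hφe f hf⟩
  have himg : φ '' M ⊆ C := by rintro v ⟨e, he, rfl⟩; exact hφC e he
  have hcard : (φ '' M).ncard = M.ncard := Set.ncard_image_of_injOn hinj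
  have hle : M.ncard ≤ C.ncard := by
    rw [← hcard]; exact Set.ncard_le_ncard himg C.toFinite
  refine ⟨hle, fun heq => ?_⟩
  have himg2 : φ '' M = C := by
    apply Set.eq_of_subset_of_ncard_le himg _ C.toFinite
    rw [hcard, heq]
  have hmem : ∀ v ∈ C, ∃ e ∈ M, v ∈ e := by
    intro v hv
    rw [← himg2] at hv
    obtain ⟨e, he, rfl⟩ := hv
    exact ⟨e, he, hφe e he⟩
  refine ⟨hmem, ?_⟩
  intro e he v w hv hw hvC hwC
  have key : ∀ u, u ∈ e → u ∈ C → u = φ e := by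
    intro u hue huC
    have hu : u ∈ φ '' M := himg2.symm ▸ huC
    obtain ⟨f, hf, hfu⟩ := hu
    by_cases hef : e = f
    · rw [← hfu, hef]
    · exact ((hM.2 e he f hf hef u) ⟨hue, hfu ▸ hφe f hf⟩).elim
  rw [key v hv hvC, key w hw hwC]
theorem hall_matching {A : SimpleGraph V} (hA : A.IsTree) {B : Set V} {R : Set (Sym2 V)}
    {G : Set V} (hBC : IsBColoring A B R G) :
    ∃ N : Set (Sym2 V), IsMatch A N ∧ N.ncard = B.ncard + R.ncard := by
  classical
  obtain ⟨hRE, hUniv, hBG, hBR, hGR, hRM, hGadj, hBdeg⟩ := hBC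
  obtain ⟨r⟩ := hA.isConnected.nonempty
  set t : ↥B → Finset V := fun b => (Set.toFinite (A.neighborSet ↑b ∩ G)).toFinset with ht
  have htmem : ∀ (b : ↥B) (g : V), g ∈ t b ↔ A.Adj ↑b g ∧ g ∈ G := by
    intro b g
    rw [ht]
    simp only [Set.Finite.mem_toFinset, Set.mem_inter_iff, SimpleGraph.mem_neighborSet]
  have htcard : ∀ b : ↥B, 2 ≤ (t b).card := by
    intro b
    have := hBdeg ↑b b.2
    rwa [Set.ncard_eq_toFinset_card _ (Set.toFinite (A.neighborSet ↑b ∩ G))] at this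
  have hHall : ∀ s : Finset ↥B, s.card ≤ (s.biUnion t).card := by
    intro s
    set E : Finset (Sym2 V) := s.biUnion (fun b => (t b).image (fun g => s((b : V), g))) with hE
    have hEedge : ∀ e ∈ E, e ∈ A.edgeSet := by
      intro e he
      rw [hE, Finset.mem_biUnion] at he
      obtain ⟨b, _, he⟩ := he
      rw [Finset.mem_image] at he
      obtain ⟨g, hg, rfl⟩ := he
      exact ((htmem b g).1 hg).1
    have hcard : E.card = ∑ b ∈ s, ((t b).image (fun g => s((b : V), g))).card := by
      apply Finset.card_biUnion
      intro b _ b' _ hbb'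
      rw [Function.onFun, Finset.disjoint_left]
      intro e he he'
      rw [Finset.mem_image] at he he'
      obtain ⟨g, hg, rfl⟩ := he
      obtain ⟨g', hg', heq⟩ := he'
      rw [Sym2.eq_iff] at heq
      rcases heq with ⟨h1, h2⟩ | ⟨h1, h2⟩
      · exact hbb' (Subtype.ext h1.symm)
      · exact (hBG.ne_of_mem b.2 ((htmem b' g').1 hg').2) h2.symm
    have himgcard : ∀ b : ↥B, ((t b).image (fun g => s((b : V), g))).card = (t b).card := by
      intro b
      apply Finset.card_image_of_injOn
      intro g hg g' hg' heq
      rw [Sym2.eq_iff] at heq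
      rcases heq with ⟨_, h2⟩ | ⟨h1, h2⟩
      · exact h2
      · exact h2.trans h1
    have hlower : 2 * s.card ≤ E.card := by
      rw [hcard]
      calc 2 * s.card = ∑ _b ∈ s, 2 := by rw [Finset.sum_const, smul_eq_mul, mul_comm]
        _ ≤ ∑ b ∈ s, ((t b).image (fun g => s((b : V), g))).card := by
            apply Finset.sum_le_sum
            intro b _
            rw [himgcard b]
            exact htcard b
    have hupper : E.card ≤ s.card + (s.biUnion t).card := by
      have hinj : Set.InjOn (farV A r) E := by
        intro e he f hf hef
        exact far_inj hA r (hEedge e he) (hEedge f hf) hef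
      have h1 : E.card = (E.image (farV A r)).card :=
        (Finset.card_image_of_injOn hinj).symm
      have h2 : E.image (farV A r) ⊆ (s.image (fun b : ↥B => (b : V))) ∪ s.biUnion t := by
        intro v hv
        rw [Finset.mem_image] at hv
        obtain ⟨e, he, rfl⟩ := hv
        have hmem : farV A r e ∈ e := far_mem A r e
        rw [hE, Finset.mem_biUnion] at he
        obtain ⟨b, hb, he⟩ := he
        rw [Finset.mem_image] at he
        obtain ⟨g, hg, rfl⟩ := he
        rw [Sym2.mem_iff] at hmem
        rcases hmem with h | h
        · rw [h]
          exact Finset.mem_union_left _ (Finset.mem_image.2 ⟨b, hb, rfl⟩)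
        · rw [h]
          exact Finset.mem_union_right _ (Finset.mem_biUnion.2 ⟨b, hb, hg⟩)
      calc E.card = (E.image (farV A r)).card := h1
        _ ≤ ((s.image (fun b : ↥B => (b : V))) ∪ s.biUnion t).card := Finset.card_le_card h2
        _ ≤ (s.image (fun b : ↥B => (b : V))).card + (s.biUnion t).card :=
            Finset.card_union_le _ _
        _ ≤ s.card + (s.biUnion t).card := by
            exact Nat.add_le_add_right (Finset.card_image_le) _
    omega
  obtain ⟨f, hfinj, hft⟩ := (Finset.all_card_le_biUnion_card_iff_exists_injective t).1 hHall
  set N : Set (Sym2 V) := R ∪ (fun b : ↥B => s((b : V), f b)) '' Set.univ with hN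
  have hfG : ∀ b : ↥B, f b ∈ G := fun b => ((htmem b (f b)).1 (hft b)).2
  have hfadj : ∀ b : ↥B, A.Adj ↑b (f b) := fun b => ((htmem b (f b)).1 (hft b)).1
  have hBGmem : ∀ (b : ↥B) (v : V), v ∈ s((b : V), f b) → v ∈ B ∪ G := by
    intro b v hv
    rw [Sym2.mem_iff] at hv
    rcases hv with rfl | rfl
    · exact Or.inl b.2
    · exact Or.inr (hfG b)
  have hedge_inj : ∀ b b' : ↥B, s((b : V), f b) = s((b' : V), f b') → b = b' := by
    intro b b' heq
    rw [Sym2.eq_iff] at heq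
    rcases heq with ⟨h1, _⟩ | ⟨h1, h2⟩
    · exact Subtype.ext h1
    · exact absurd (h1 ▸ hfG b') (fun h => hBG.ne_of_mem b.2 h rfl)
  refine ⟨N, ⟨?_, ?_⟩, ?_⟩
  · rintro e (he | ⟨b, _, rfl⟩)
    · exact hRE he
    · exact hfadj b
  · rintro e (he | ⟨b, _, rfl⟩) g (hg | ⟨b', _, rfl⟩) hne v ⟨hve, hvg⟩
    · exact hRM e he g hg hne v ⟨hve, hvg⟩
    · rcases hBGmem b' v hvg with hv | hv
      · exact hBR.ne_of_mem hv ⟨e, he, hve⟩ rfl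
      · exact hGR.ne_of_mem hv ⟨e, he, hve⟩ rfl
    · rcases hBGmem b v hve with hv | hv
      · exact hBR.ne_of_mem hv ⟨g, hg, hvg⟩ rfl
      · exact hGR.ne_of_mem hv ⟨g, hg, hvg⟩ rfl
    · have hbb' : b ≠ b' := fun h => hne (by rw [h])
      rw [Sym2.mem_iff] at hve hvg
      rcases hve with rfl | rfl <;> rcases hvg with h | h
      · exact hbb' (Subtype.ext h)
      · exact hBG.ne_of_mem b.2 (hfG b') h
      · exact hBG.ne_of_mem b'.2 (hfG b) h.symm
      · exact hbb' (hfinj h)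
  · have hdisj : Disjoint R ((fun b : ↥B => s((b : V), f b)) '' Set.univ) := by
      rw [Set.disjoint_right]
      rintro e ⟨b, _, rfl⟩ heR
      exact hBR.ne_of_mem b.2 ⟨_, heR, Sym2.mem_mk_left _ _⟩ rfl
    have hinjOn : Set.InjOn (fun b : ↥B => s((b : V), f b)) Set.univ := by
      intro b _ b' _ heq
      exact hedge_inj b b' heq
    rw [hN, Set.ncard_union_eq hdisj (Set.toFinite _) (Set.toFinite _),
      Set.ncard_image_of_injOn hinjOn, Set.ncard_univ, Nat.card_coe_set_eq, Nat.add_comm]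
theorem maxMatching_of_bColoring (A : SimpleGraph V) (hA : A.IsTree)
    (B : Set V) (R : Set (Sym2 V)) (G : Set V) (hBC : IsBColoring A B R G)
    (M : Set (Sym2 V)) (hM : IsMaxMatch A M) :
    R ⊆ M ∧
    (∀ b ∈ B, ∃! e : Sym2 V, e ∈ M ∧ ∃ g ∈ G, e = s(b, g)) ∧
    (∀ e ∈ M, e ∈ R ∨ ∃ b ∈ B, ∃ g ∈ G, e = s(b, g)) ∧
    M.ncard = B.ncard + R.ncard := by
  classical
  obtain ⟨hMatch, hMmax⟩ := hM
  have hBC' := hBC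
  obtain ⟨hRE, hUniv, hBG, hBR, hGR, hRM, hGadj, hBdeg⟩ := hBC'
  haveI hVne : Nonempty V := hA.isConnected.nonempty
  obtain ⟨r⟩ := hA.isConnected.nonempty
  have hpart : ∀ v : V, v ∈ B ∨ v ∈ G ∨ v ∈ Rsupp R := by
    intro v
    have hv : v ∈ B ∪ G ∪ Rsupp R := hUniv ▸ Set.mem_univ v
    rcases hv with (hv | hv) | hv
    · exact Or.inl hv
    · exact Or.inr (Or.inl hv)
    · exact Or.inr (Or.inr hv)
  have hMuniq : ∀ (v : V) (e f : Sym2 V), e ∈ M → f ∈ M → v ∈ e → v ∈ f → e = f := by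
    intro v e f he hf hve hvf
    by_contra hne
    exact hMatch.2 e he f hf hne v ⟨hve, hvf⟩
  -- cardinality of M
  obtain ⟨N, hNmatch, hNcard⟩ := hall_matching hA hBC
  have hMcard : M.ncard = B.ncard + R.ncard := by
    apply le_antisymm
    · have h := (cover_exact hMatch (cover_covers hA hBC r)).1
      rwa [cover_ncard hBC r] at h
    · exact hNcard ▸ hMmax N hNmatch
  -- exact-cover consequences for every root
  have hexact : ∀ r' : V,
      (∀ v ∈ B ∪ (nearV A r') '' R, ∃ e ∈ M, v ∈ e) ∧
      (∀ e ∈ M, ∀ v w, v ∈ e → w ∈ e → v ∈ B ∪ (nearV A r') '' R →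
        w ∈ B ∪ (nearV A r') '' R → v = w) := by
    intro r'
    exact (cover_exact hMatch (cover_covers hA hBC r')).2
      (by rw [hMcard, cover_ncard hBC r'])
  have hBmatched : ∀ b ∈ B, ∃ e ∈ M, b ∈ e := fun b hb =>
    (hexact r).1 b (Or.inl hb)
  have hnear_self : ∀ (x : V) (e : Sym2 V), e ∈ A.edgeSet → x ∈ e → nearV A x e = x := by
    intro x e he hx
    rcases mem_near_or_far A x hx with h | h
    · exact h.symm
    · exfalso
      have := dist_far hA x he
      rw [← h, SimpleGraph.dist_self] at this
      omega
  have hRsmatched : ∀ x ∈ Rsupp R, ∃ e ∈ M, x ∈ e := by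
    rintro x ⟨e₁, he₁, hx⟩
    exact (hexact x).1 x (Or.inr ⟨e₁, he₁, hnear_self x e₁ (hRE he₁) hx⟩)
  -- the matching function
  have hm0 : ∀ v : V, ∃ e, (∃ f ∈ M, v ∈ f) → e ∈ M ∧ v ∈ e := by
    intro v
    by_cases h : ∃ f ∈ M, v ∈ f
    · obtain ⟨f, hf, hvf⟩ := h
      exact ⟨f, fun _ => ⟨hf, hvf⟩⟩
    · exact ⟨s(v, v), fun hc => absurd hc h⟩
  choose m hm using hm0
  -- finsets
  set MF := (Set.toFinite M).toFinset with hMF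
  set BF := (Set.toFinite B).toFinset with hBF
  set RF := (Set.toFinite R).toFinset with hRF
  set RsF := (Set.toFinite (Rsupp R)).toFinset with hRsF
  have hMFmem : ∀ e, e ∈ MF ↔ e ∈ M := fun e => Set.Finite.mem_toFinset _
  have hBFmem : ∀ v, v ∈ BF ↔ v ∈ B := fun v => Set.Finite.mem_toFinset _
  have hRFmem : ∀ e, e ∈ RF ↔ e ∈ R := fun e => Set.Finite.mem_toFinset _
  have hRsFmem : ∀ v, v ∈ RsF ↔ v ∈ Rsupp R := fun v => Set.Finite.mem_toFinset _
  -- sums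
  have hfibgen : ∀ (SF : Finset V), (∀ v ∈ SF, ∃ e ∈ M, v ∈ e) →
      SF.card = ∑ e ∈ MF, (SF.filter (fun v => v ∈ e)).card := by
    intro SF hSF
    have hmap : ∀ v ∈ SF, m v ∈ MF := by
      intro v hv
      rw [hMFmem]
      exact (hm v (hSF v hv)).1
    rw [Finset.card_eq_sum_card_fiberwise hmap]
    apply Finset.sum_congr rfl
    intro e heMF
    congr 1
    ext v
    simp only [Finset.mem_filter, and_congr_right_iff]
    intro hv
    constructor
    · rintro rfl
      exact (hm v (hSF v hv)).2
    · intro hve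
      obtain ⟨hmM', hvm⟩ := hm v (hSF v hv)
      exact hMuniq v _ _ hmM' ((hMFmem e).1 heMF) hvm hve
  have hsumB : BF.card = ∑ e ∈ MF, (BF.filter (fun v => v ∈ e)).card :=
    hfibgen BF (fun v hv => hBmatched v ((hBFmem v).1 hv))
  have hsumRs : RsF.card = ∑ e ∈ MF, (RsF.filter (fun v => v ∈ e)).card :=
    hfibgen RsF (fun v hv => hRsmatched v ((hRsFmem v).1 hv))
  have hRscard : RsF.card = 2 * RF.card := by
    have hun : RsF = RF.biUnion (fun e => Finset.univ.filter (fun v => v ∈ e)) := by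
      ext v
      simp only [hRsFmem, Finset.mem_biUnion, Finset.mem_filter, Finset.mem_univ, true_and,
        hRFmem]
      exact Iff.rfl
    rw [hun, Finset.card_biUnion]
    · have h2 : ∀ e ∈ RF, (Finset.univ.filter (fun v => v ∈ e)).card = 2 := by
        intro e heRF
        obtain ⟨x, y, rfl⟩ : ∃ x y, e = s(x, y) := ⟨_, _, sym2_out e⟩
        have hadj : A.Adj x y := hRE ((hRFmem _).1 heRF)
        have : Finset.univ.filter (fun v => v ∈ s(x, y)) = {x, y} := by
          ext v
          simp [Sym2.mem_iff]
        rw [this, Finset.card_pair hadj.ne]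
      rw [Finset.sum_congr rfl h2, Finset.sum_const, smul_eq_mul, mul_comm]
    · intro e he f hf hef
      rw [Function.onFun, Finset.disjoint_left]
      intro v hv hv'
      exact hRM e ((hRFmem e).1 he) f ((hRFmem f).1 hf) hef v
        ⟨(Finset.mem_filter.1 hv).2, (Finset.mem_filter.1 hv').2⟩
  have hMFcard : MF.card = BF.card + RF.card := by
    have h1 : M.ncard = MF.card := Set.ncard_eq_toFinset_card _ _
    have h2 : B.ncard = BF.card := Set.ncard_eq_toFinset_card _ _
    have h3 : R.ncard = RF.card := Set.ncard_eq_toFinset_card _ _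
    rw [← h1, ← h2, ← h3, hMcard]
  -- pointwise bounds
  have hcB1 : ∀ e ∈ MF, (BF.filter (fun v => v ∈ e)).card ≤ 1 := by
    intro e heMF
    rw [Finset.card_le_one]
    intro v hv w hw
    rw [Finset.mem_filter] at hv hw
    exact (hexact r).2 e ((hMFmem e).1 heMF) v w hv.2 hw.2
      (Or.inl ((hBFmem v).1 hv.1)) (Or.inl ((hBFmem w).1 hw.1))
  have hcB0 : ∀ e ∈ MF, (BF.filter (fun v => v ∈ e)).card = 0 →
      (RsF.filter (fun v => v ∈ e)).card = 2 := by
    intro e heMF h0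
    have heM := (hMFmem e).1 heMF
    obtain ⟨x, y, rfl⟩ : ∃ x y, e = s(x, y) := ⟨_, _, sym2_out e⟩
    have hadj : A.Adj x y := hMatch.1 heM
    rw [Finset.card_eq_zero] at h0
    have hnB : ∀ v ∈ s(x, y), v ∉ B := by
      intro v hv hvB
      have hmem : v ∈ BF.filter (fun u => u ∈ s(x, y)) :=
        Finset.mem_filter.2 ⟨(hBFmem v).2 hvB, hv⟩
      rw [h0] at hmem
      exact Finset.notMem_empty v hmem
    have hxRs : x ∈ Rsupp R := by
      rcases hpart x with h | h | h
      · exact absurd h (hnB x (Sym2.mem_mk_left _ _))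
      · exact absurd (hGadj x y hadj h) (hnB y (Sym2.mem_mk_right _ _))
      · exact h
    have hyRs : y ∈ Rsupp R := by
      rcases hpart y with h | h | h
      · exact absurd h (hnB y (Sym2.mem_mk_right _ _))
      · exact absurd (hGadj y x hadj.symm h) (hnB x (Sym2.mem_mk_left _ _))
      · exact h
    have hfil : RsF.filter (fun v => v ∈ s(x, y)) = {x, y} := by
      ext v
      simp only [Finset.mem_filter, Sym2.mem_iff, Finset.mem_insert, Finset.mem_singleton]
      constructor
      · rintro ⟨_, h⟩; exact h
      · rintro (rfl | rfl)
        · exact ⟨(hRsFmem v).2 hxRs, Or.inl rfl⟩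
        · exact ⟨(hRsFmem v).2 hyRs, Or.inr rfl⟩
    rw [hfil, Finset.card_pair hadj.ne]
  -- conclude: edges with a B-endpoint have no Rsupp endpoint
  have hkey : ∀ e ∈ MF, (BF.filter (fun v => v ∈ e)).card = 1 →
      (RsF.filter (fun v => v ∈ e)).card = 0 := by
    have hPQ := Finset.card_filter_add_card_filter_not
      (s := MF) (p := fun e => (BF.filter (fun v => v ∈ e)).card = 1)
    set P := MF.filter (fun e => (BF.filter (fun v => v ∈ e)).card = 1) with hPdef
    set Q := MF.filter (fun e => ¬(BF.filter (fun v => v ∈ e)).card = 1) with hQdef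
    have hsB : (∑ f ∈ P, (BF.filter (fun v => v ∈ f)).card) +
        (∑ f ∈ Q, (BF.filter (fun v => v ∈ f)).card) = BF.card := by
      rw [hsumB]
      exact Finset.sum_filter_add_sum_filter_not MF _ _
    have hPsum : ∑ f ∈ P, (BF.filter (fun v => v ∈ f)).card = P.card := by
      rw [Finset.sum_congr rfl (fun f hf => (Finset.mem_filter.1 hf).2),
        Finset.sum_const, smul_eq_mul, mul_one]
    have hQ0 : ∀ f ∈ Q, (BF.filter (fun v => v ∈ f)).card = 0 := by
      intro f hf
      obtain ⟨hfM, hne⟩ := Finset.mem_filter.1 hf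
      have := hcB1 f hfM
      omega
    have hQsum : ∑ f ∈ Q, (BF.filter (fun v => v ∈ f)).card = 0 :=
      Finset.sum_eq_zero hQ0
    have hPcard : P.card = BF.card := by omega
    have hsRs : (∑ f ∈ P, (RsF.filter (fun v => v ∈ f)).card) +
        (∑ f ∈ Q, (RsF.filter (fun v => v ∈ f)).card) = 2 * RF.card := by
      rw [← hRscard, hsumRs]
      exact Finset.sum_filter_add_sum_filter_not MF _ _
    have hQRs : ∑ f ∈ Q, (RsF.filter (fun v => v ∈ f)).card = 2 * Q.card := by
      rw [Finset.sum_congr rfl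
        (fun f hf => hcB0 f (Finset.mem_filter.1 hf).1 (hQ0 f hf)),
        Finset.sum_const, smul_eq_mul, mul_comm]
    have hQcard : Q.card = RF.card := by omega
    have hPRs : ∑ f ∈ P, (RsF.filter (fun v => v ∈ f)).card = 0 := by omega
    intro e heMF h1
    exact (Finset.sum_eq_zero_iff.1 hPRs) e (Finset.mem_filter.2 ⟨heMF, h1⟩)
  -- classification
  have hclass : ∀ e ∈ M, (∃ b ∈ B, ∃ g ∈ G, e = s(b, g)) ∨ (∀ v ∈ e, v ∈ Rsupp R) := by
    intro e heM
    have heMF : e ∈ MF := (hMFmem e).2 heM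
    rcases Nat.le_one_iff_eq_zero_or_eq_one.1 (hcB1 e heMF) with h0 | h1
    · right
      rw [Finset.card_eq_zero] at h0
      intro v hv
      have hvnB : v ∉ B := by
        intro hc
        have hmem : v ∈ BF.filter (fun u => u ∈ e) :=
          Finset.mem_filter.2 ⟨(hBFmem v).2 hc, hv⟩
        rw [h0] at hmem
        exact Finset.notMem_empty v hmem
      rcases hpart v with h | h | h
      · exact absurd h hvnB
      · exfalso
        obtain ⟨z, rfl⟩ := Sym2.mem_iff_exists.1 hv
        have hadj : A.Adj v z := hMatch.1 heM
        have hmem : z ∈ BF.filter (fun u => u ∈ s(v, z)) :=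
          Finset.mem_filter.2 ⟨(hBFmem z).2 (hGadj v z hadj h), Sym2.mem_mk_right _ _⟩
        rw [h0] at hmem
        exact Finset.notMem_empty z hmem
      · exact h
    · left
      have hRs0 := hkey e heMF h1
      rw [Finset.card_eq_zero] at hRs0
      obtain ⟨b, hb⟩ := Finset.card_eq_one.1 h1
      have hbBe : b ∈ BF ∧ b ∈ e := Finset.mem_filter.1 (hb ▸ Finset.mem_singleton_self b)
      obtain ⟨z, rfl⟩ := Sym2.mem_iff_exists.1 hbBe.2
      have hadj : A.Adj b z := hMatch.1 heM
      refine ⟨b, (hBFmem b).1 hbBe.1, z, ?_, rfl⟩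
      rcases hpart z with h | h | h
      · exfalso
        have hmem : z ∈ BF.filter (fun u => u ∈ s(b, z)) :=
          Finset.mem_filter.2 ⟨(hBFmem z).2 h, Sym2.mem_mk_right _ _⟩
        rw [hb] at hmem
        exact hadj.ne (Finset.mem_singleton.1 hmem).symm
      · exact h
      · exfalso
        have hmem : z ∈ RsF.filter (fun u => u ∈ s(b, z)) :=
          Finset.mem_filter.2 ⟨(hRsFmem z).2 h, Sym2.mem_mk_right _ _⟩
        rw [hRs0] at hmem
        exact Finset.notMem_empty z hmem
  -- R ⊆ M
  have hRM' : R ⊆ M := by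
    by_contra hnot
    rw [Set.not_subset] at hnot
    obtain ⟨e₀, he₀R, he₀M⟩ := hnot
    set T := Rsupp (R \ M) with hTdef
    have hre0 : ∀ x : V, ∃ e, (∃ f ∈ R \ M, x ∈ f) → e ∈ R \ M ∧ x ∈ e := by
      intro x
      by_cases h : ∃ f ∈ R \ M, x ∈ f
      · obtain ⟨f, hf, hxf⟩ := h
        exact ⟨f, fun _ => ⟨hf, hxf⟩⟩
      · exact ⟨s(x, x), fun hc => absurd hc h⟩
    choose re hre using hre0
    have hTsub : T ⊆ Rsupp R := by
      rintro x ⟨e, he, hx⟩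
      exact ⟨e, he.1, hx⟩
    have hmT : ∀ x ∈ T, m x ∈ M ∧ x ∈ m x := fun x hx => hm x (hRsmatched x (hTsub hx))
    have hmnotR : ∀ x ∈ T, m x ∉ R := by
      intro x hx hcon
      obtain ⟨hmM, hxm⟩ := hmT x hx
      obtain ⟨hreRM, hxre⟩ := hre x hx
      have hne : m x ≠ re x := fun h => hreRM.2 (h ▸ hmM)
      exact hRM (m x) hcon (re x) hreRM.1 hne x ⟨hxm, hxre⟩
    have hmend : ∀ x ∈ T, ∀ y ∈ m x, y ∈ T := by
      intro x hx y hy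
      obtain ⟨hmM, hxm⟩ := hmT x hx
      rcases hclass (m x) hmM with ⟨b, hb, g, hg, heq⟩ | hRs
      · exfalso
        rw [heq, Sym2.mem_iff] at hxm
        have hxRs := hTsub hx
        rcases hxm with rfl | rfl
        · exact hBR.ne_of_mem hb hxRs rfl
        · exact hGR.ne_of_mem hg hxRs rfl
      · obtain ⟨ey, heyR, hyey⟩ := hRs y hy
        refine ⟨ey, ⟨heyR, ?_⟩, hyey⟩
        intro heyM
        have heq2 : m x = ey := hMuniq y _ _ hmM heyM hy hyey
        exact hmnotR x hx (heq2 ▸ heyR)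
    set H := (R \ M) ∪ (m '' T) with hHdef
    have hHedge : ∀ h ∈ H, h ∈ A.edgeSet := by
      rintro h (hh | ⟨x, hx, rfl⟩)
      · exact hRE hh.1
      · exact hMatch.1 (hmT x hx).1
    have hHT : ∀ h ∈ H, ∀ v ∈ h, v ∈ T := by
      rintro h (hh | ⟨x, hx, rfl⟩) v hv
      · exact ⟨h, hh, hv⟩
      · exact hmend x hx v hv
    have hx₀ : (Quot.out e₀).1 ∈ e₀ := by
      have h : (Quot.out e₀).1 ∈ s((Quot.out e₀).1, (Quot.out e₀).2) := Sym2.mem_mk_left _ _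
      rwa [← sym2_out e₀] at h
    have hTne : T.Nonempty := ⟨(Quot.out e₀).1, ⟨e₀, ⟨he₀R, he₀M⟩, hx₀⟩⟩
    obtain ⟨v₀, hv₀Tf, hv₀min⟩ := Finset.exists_min_image
      ((Set.toFinite T).toFinset) (fun v => A.dist v r)
      (by rwa [Set.Finite.toFinset_nonempty])
    have hv₀T : v₀ ∈ T := (Set.Finite.mem_toFinset _).1 hv₀Tf
    have hHfar : farV A r '' H ⊆ T \ {v₀} := by
      rintro v ⟨h, hh, rfl⟩
      refine ⟨hHT h hh _ (far_mem A r h), ?_⟩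
      intro hveq
      rw [Set.mem_singleton_iff] at hveq
      have hdist := dist_far hA r (hHedge h hh)
      have hnT : nearV A r h ∈ T := hHT h hh _ (near_mem A r h)
      have hmin := hv₀min (nearV A r h) ((Set.Finite.mem_toFinset _).2 hnT)
      rw [← hveq] at hmin
      omega
    have hHcard : H.ncard ≤ T.ncard - 1 := by
      have hinj : Set.InjOn (farV A r) H := fun a ha b hb =>
        far_inj hA r (hHedge a ha) (hHedge b hb)
      calc H.ncard = (farV A r '' H).ncard := (Set.ncard_image_of_injOn hinj).symm
        _ ≤ (T \ {v₀}).ncard := Set.ncard_le_ncard hHfar (Set.toFinite _)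
        _ = T.ncard - 1 := Set.ncard_diff_singleton_of_mem hv₀T
    have hψ0 : ∀ x : V, ∃ h, x ∈ T → h ∈ H ∧ x ∈ h ∧ farV A r h ≠ x := by
      intro x
      by_cases hx : x ∈ T
      · obtain ⟨hreRM, hxre⟩ := hre x hx
        obtain ⟨hmM, hxm⟩ := hmT x hx
        have hreH : re x ∈ H := Or.inl hreRM
        have hmH : m x ∈ H := Or.inr ⟨x, hx, rfl⟩
        by_cases hfar : farV A r (re x) = x
        · refine ⟨m x, fun _ => ⟨hmH, hxm, ?_⟩⟩
          intro hfar2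
          have heq3 : re x = m x :=
            far_inj hA r (hHedge _ hreH) (hHedge _ hmH) (hfar.trans hfar2.symm)
          exact hreRM.2 (heq3 ▸ hmM)
        · exact ⟨re x, fun _ => ⟨hreH, hxre, hfar⟩⟩
      · exact ⟨s(x, x), fun hc => absurd hc hx⟩
    choose ψ hψ using hψ0
    have hψinj : Set.InjOn ψ T := by
      intro x hx y hy hxy
      by_contra hne
      obtain ⟨hxH, hxe, hxf⟩ := hψ x hx
      obtain ⟨hyH, hye, hyf⟩ := hψ y hy
      rw [← hxy] at hye
      have heq4 : ψ x = s(x, y) := (Sym2.mem_and_mem_iff hne).1 ⟨hxe, hye⟩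
      have hfm : farV A r (ψ x) ∈ ψ x := far_mem A r (ψ x)
      rw [heq4, Sym2.mem_iff] at hfm
      rw [heq4] at hxf
      rcases hfm with h | h
      · exact hxf h
      · rw [hxy] at heq4
        rw [heq4] at hyf
        exact hyf h
    have hψH : ψ '' T ⊆ H := by
      rintro h ⟨x, hx, rfl⟩
      exact (hψ x hx).1
    have hTcard : T.ncard ≤ H.ncard := by
      calc T.ncard = (ψ '' T).ncard := (Set.ncard_image_of_injOn hψinj).symm
        _ ≤ H.ncard := Set.ncard_le_ncard hψH (Set.toFinite _)
    have hT1 : 1 ≤ T.ncard := (Set.ncard_pos (Set.toFinite T)).2 hTne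
    omega
  refine ⟨hRM', ?_, ?_, hMcard⟩
  · -- unique B-G edge at each b
    intro b hb
    obtain ⟨e, he, hbe⟩ := hBmatched b hb
    rcases hclass e he with ⟨b', hb', g, hg, rfl⟩ | hRs
    · have hbb' : b = b' := by
        rw [Sym2.mem_iff] at hbe
        rcases hbe with h | h
        · exact h
        · exact absurd (h ▸ hb) (fun hc => hBG.ne_of_mem hc hg rfl)
      subst hbb'
      refine ⟨s(b, g), ⟨he, g, hg, rfl⟩, ?_⟩
      rintro e' ⟨he', g', hg', rfl⟩
      exact hMuniq b _ _ he' he (Sym2.mem_mk_left _ _) (Sym2.mem_mk_left _ _)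
    · exact absurd (hRs b hbe) (fun hc => hBR.ne_of_mem hb hc rfl)
  · -- every edge of M is in R or a B-G edge
    intro e he
    rcases hclass e he with h | hRs
    · exact Or.inr h
    · left
      have hxe : (Quot.out e).1 ∈ e := by
        have h : (Quot.out e).1 ∈ s((Quot.out e).1, (Quot.out e).2) := Sym2.mem_mk_left _ _
        rwa [← sym2_out e] at h
      obtain ⟨e₁, he₁, hxe₁⟩ := hRs _ hxe
      rwa [hMuniq _ e e₁ he (hRM' he₁) hxe hxe₁]
end

section
/- In a finite tree, the minimum size of a vertex cover equals the maximum size of a matching (König's theorem for trees), and both equal |B| + |R| where (B, R, G) is the b-coloring of the tree. -/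
set_option linter.unusedSectionVars false
set_option maxHeartbeats 1000000

variable {V : Type*} [Fintype V] [DecidableEq V]

open SimpleGraph

section AuxLemmas

variable {A : SimpleGraph V}

lemma dist_support_le {r u x : V} (p : A.Walk r u) (hx : x ∈ p.support) :
    A.dist r x ≤ p.length :=
  le_trans (SimpleGraph.dist_le (p.takeUntil x hx)) (Walk.length_takeUntil_le p hx)

lemma exists_shortest_path (hc : A.Connected) (r u : V) :
    ∃ p : A.Walk r u, p.IsPath ∧ p.length = A.dist r u := by
  obtain ⟨w, hw⟩ := hc.exists_walk_length_eq_dist r u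
  exact ⟨w.bypass, w.bypass_isPath,
    le_antisymm (hw ▸ w.length_bypass_le) (SimpleGraph.dist_le _)⟩

lemma parent_unique (hA : A.IsTree) (r : V) {u w v : V}
    (h1 : A.Adj u v) (h2 : A.Adj w v)
    (d1 : A.dist r u + 1 = A.dist r v) (d2 : A.dist r w + 1 = A.dist r v) : u = w := by
  obtain ⟨p, hp, hpl⟩ := exists_shortest_path hA.isConnected r u
  obtain ⟨q, hq, hql⟩ := exists_shortest_path hA.isConnected r w
  have hvp : v ∉ p.reverse.support := by
    rw [Walk.support_reverse, List.mem_reverse]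
    intro hv
    have := dist_support_le p hv
    omega
  have hvq : v ∉ q.reverse.support := by
    rw [Walk.support_reverse, List.mem_reverse]
    intro hv
    have := dist_support_le q hv
    omega
  have hP : (Walk.cons h1.symm p.reverse).IsPath := hp.reverse.cons hvp
  have hQ : (Walk.cons h2.symm q.reverse).IsPath := hq.reverse.cons hvq
  have heq : (⟨Walk.cons h1.symm p.reverse, hP⟩ : A.Path v r) = ⟨Walk.cons h2.symm q.reverse, hQ⟩ :=
    hA.IsAcyclic.path_unique _ _
  have heq' : (Walk.cons h1.symm p.reverse) = (Walk.cons h2.symm q.reverse) :=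
    congrArg Subtype.val heq
  have := congrArg (fun z => z.getVert 1) heq'
  simpa [Walk.getVert_cons_succ] using this

lemma adj_dist (hA : A.IsTree) (r : V) {u v : V} (h : A.Adj u v) :
    A.dist r u + 1 = A.dist r v ∨ A.dist r v + 1 = A.dist r u := by
  have hc := hA.isConnected
  have huv : A.dist u v ≤ 1 := by
    have := SimpleGraph.dist_le h.toWalk
    simpa using this
  have hvu : A.dist v u ≤ 1 := by
    have := SimpleGraph.dist_le h.symm.toWalk
    simpa using this
  have t1 : A.dist r v ≤ A.dist r u + 1 :=
    le_trans (hc.dist_triangle (v := u)) (by omega)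
  have t2 : A.dist r u ≤ A.dist r v + 1 :=
    le_trans (hc.dist_triangle (v := v)) (by omega)
  have hne : A.dist r u ≠ A.dist r v := by
    intro he
    obtain ⟨p, hp, hpl⟩ := exists_shortest_path hc r u
    have hvp : v ∉ p.support := by
      intro hv
      have h1 : A.dist r v ≤ (p.takeUntil v hv).length := SimpleGraph.dist_le _
      have h2 : A.dist v u ≤ (p.dropUntil v hv).length := SimpleGraph.dist_le _
      have h3 : (p.takeUntil v hv).length + (p.dropUntil v hv).length = p.length := by
        rw [← Walk.length_append, Walk.take_spec]
      have h4 : A.dist v u = 0 := by omega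
      exact h.ne' ((hc.dist_eq_zero_iff).mp h4)
    have hvp' : v ∉ p.reverse.support := by
      rwa [Walk.support_reverse, List.mem_reverse]
    have hP : (Walk.cons h.symm p.reverse).IsPath := hp.reverse.cons hvp'
    obtain ⟨q, hq, hql⟩ := exists_shortest_path hc v r
    have heq : (⟨Walk.cons h.symm p.reverse, hP⟩ : A.Path v r) = ⟨q, hq⟩ :=
      hA.IsAcyclic.path_unique _ _
    have heq' : Walk.cons h.symm p.reverse = q := congrArg Subtype.val heq
    have hlen := congrArg Walk.length heq'
    simp only [Walk.length_cons, Walk.length_reverse] at hlen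
    rw [hql, SimpleGraph.dist_comm] at hlen
    omega
  omega

lemma match_le_vc {M : Set (Sym2 V)} {C : Set V} (hM : IsMatch A M) (hC : IsVC A C) :
    M.ncard ≤ C.ncard := by
  have key : ∀ e : M, ∃ v : C, (v : V) ∈ (e : Sym2 V) :=
    fun ⟨e, he⟩ => by
      obtain ⟨v, hvC, hve⟩ := hC e (hM.1 he)
      exact ⟨⟨v, hvC⟩, hve⟩
  choose F hF using key
  have hinj : Function.Injective F := by
    rintro ⟨e, he⟩ ⟨f, hf⟩ hEF
    ext1
    by_contra hne
    exact hM.2 e he f hf hne (F ⟨e, he⟩) ⟨hF _, hEF ▸ hF ⟨f, hf⟩⟩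
  calc M.ncard = Nat.card M := (Nat.card_coe_set_eq M).symm
    _ ≤ Nat.card C := Nat.card_le_card_of_injective F hinj
    _ = C.ncard := Nat.card_coe_set_eq C

end AuxLemmas

theorem koenig_for_trees (A : SimpleGraph V) (hA : A.IsTree)
    (B : Set V) (R : Set (Sym2 V)) (G : Set V) (hBC : IsBColoring A B R G) :
    sInf {n : ℕ | ∃ C : Set V, IsVC A C ∧ C.ncard = n} = B.ncard + R.ncard ∧
    sSup {n : ℕ | ∃ M : Set (Sym2 V), IsMatch A M ∧ M.ncard = n} = B.ncard + R.ncard := by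
  obtain ⟨hR, hcover, hBG, hBR, hGR, hRm, hGB, hBdeg⟩ := hBC
  have hc := hA.isConnected
  have hnonempty : Nonempty V := hc.nonempty
  obtain ⟨r⟩ := hnonempty
  -- helpers about disjointness
  have hBnotR : ∀ v ∈ B, ∀ e ∈ R, v ∉ e := fun v hv e he hve =>
    (Set.disjoint_left.mp hBR) hv ⟨e, he, hve⟩
  have hGnotR : ∀ v ∈ G, ∀ e ∈ R, v ∉ e := fun v hv e he hve =>
    (Set.disjoint_left.mp hGR) hv ⟨e, he, hve⟩
  -- every B vertex has a "child" in G
  have hchild : ∀ b ∈ B, ∃ g, g ∈ G ∧ A.Adj b g ∧ A.dist r b + 1 = A.dist r g := by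
    intro b hb
    have h2 : 1 < (A.neighborSet b ∩ G).ncard := lt_of_lt_of_le one_lt_two (hBdeg b hb)
    obtain ⟨x, hx, y, hy, hxy⟩ := (Set.one_lt_ncard (Set.toFinite _)).mp h2
    have hbx : A.Adj b x := hx.1
    have hby : A.Adj b y := hy.1
    rcases adj_dist hA r hbx with hdx | hdx
    · exact ⟨x, hx.2, hbx, hdx⟩
    · rcases adj_dist hA r hby with hdy | hdy
      · exact ⟨y, hy.2, hby, hdy⟩
      · exact absurd (parent_unique hA r hbx.symm hby.symm hdx hdy) hxy
  choose! gb hgb1 hgb2 hgb3 using hchild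
  -- the matching
  set M : Set (Sym2 V) := R ∪ (fun b => s(b, gb b)) '' B with hMdef
  have key2 : ∀ b ∈ B, ∀ b' ∈ B, ∀ v : V, v ∈ s(b, gb b) → v ∈ s(b', gb b') → b = b' := by
    intro b hb b' hb' v hv hv'
    rcases Sym2.mem_iff.mp hv with h1 | h1 <;> rcases Sym2.mem_iff.mp hv' with h2 | h2
    · exact h1.symm.trans h2
    · exact absurd (show b ∈ G by rw [h1.symm.trans h2]; exact hgb1 b' hb')
        (Set.disjoint_left.mp hBG hb)
    · exact absurd (show b' ∈ G by rw [← h1.symm.trans h2]; exact hgb1 b hb)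
        (Set.disjoint_left.mp hBG hb')
    · have e : gb b = gb b' := h1.symm.trans h2
      exact parent_unique hA r (hgb2 b hb) (e.symm ▸ hgb2 b' hb') (hgb3 b hb)
        (e.symm ▸ hgb3 b' hb')
  have key1 : ∀ e ∈ R, ∀ b ∈ B, ∀ v : V, v ∈ e → v ∈ s(b, gb b) → False := by
    intro e he b hb v hve hvf
    rcases Sym2.mem_iff.mp hvf with h | h
    · exact hBnotR b hb e he (h ▸ hve)
    · exact hGnotR (gb b) (hgb1 b hb) e he (h ▸ hve)
  have hMmatch : IsMatch A M := by
    constructor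
    · rintro e (heR | ⟨b, hb, rfl⟩)
      · exact hR heR
      · exact (A.mem_edgeSet).mpr (hgb2 b hb)
    · rintro e he f hf hef v ⟨hve, hvf⟩
      rcases he with heR | ⟨b, hb, rfl⟩ <;> rcases hf with hfR | ⟨b', hb', rfl⟩
      · exact hRm e heR f hfR hef v ⟨hve, hvf⟩
      · exact key1 e heR b' hb' v hve hvf
      · exact key1 f hfR b hb v hvf hve
      · exact hef (by rw [key2 b hb b' hb' v hve hvf])
  have hdisj : Disjoint R ((fun b => s(b, gb b)) '' B) := by
    rw [Set.disjoint_right]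
    rintro e ⟨b, hb, rfl⟩ heR
    exact hBnotR b hb _ heR (Sym2.mem_mk_left _ _)
  have himg : ((fun b => s(b, gb b)) '' B).ncard = B.ncard :=
    Set.ncard_image_of_injOn (fun b hb b' hb' hbe =>
      key2 b hb b' hb' b (Sym2.mem_mk_left _ _) (hbe ▸ Sym2.mem_mk_left b (gb b)))
  have hMcard : M.ncard = B.ncard + R.ncard := by
    rw [hMdef, Set.ncard_union_eq hdisj (Set.toFinite _) (Set.toFinite _), himg, Nat.add_comm]
  -- the vertex cover
  have htopEx : ∀ e ∈ R, ∃ x, x ∈ e ∧ ∀ y ∈ e, y ≠ x → A.dist r x + 1 = A.dist r y := by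
    intro e
    induction e using Sym2.ind with
    | _ u v =>
      intro he
      have hadj : A.Adj u v := (A.mem_edgeSet).mp (hR he)
      rcases adj_dist hA r hadj with hd | hd
      · refine ⟨u, Sym2.mem_mk_left _ _, fun y hy hyne => ?_⟩
        rcases Sym2.mem_iff.mp hy with rfl | rfl
        · exact absurd rfl hyne
        · exact hd
      · refine ⟨v, Sym2.mem_mk_right _ _, fun y hy hyne => ?_⟩
        rcases Sym2.mem_iff.mp hy with rfl | rfl
        · exact hd
        · exact absurd rfl hyne
  have : Nonempty V := ⟨r⟩
  choose! top htop1 htop2 using htopEx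
  set C : Set V := B ∪ top '' R with hCdef
  have hCvc : IsVC A C := by
    intro e hee
    induction e using Sym2.ind with
    | _ u v =>
      have hadj : A.Adj u v := (A.mem_edgeSet).mp hee
      by_cases hu : u ∈ B
      · exact ⟨u, Or.inl hu, Sym2.mem_mk_left _ _⟩
      by_cases hv : v ∈ B
      · exact ⟨v, Or.inl hv, Sym2.mem_mk_right _ _⟩
      by_cases hug : u ∈ G
      · exact absurd (hGB u v hadj hug) hv
      by_cases hvg : v ∈ G
      · exact absurd (hGB v u hadj.symm hvg) hu
      have huR : u ∈ Rsupp R := by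
        have : u ∈ B ∪ G ∪ Rsupp R := hcover ▸ Set.mem_univ u
        rcases this with (h | h) | h
        · exact absurd h hu
        · exact absurd h hug
        · exact h
      have hvR : v ∈ Rsupp R := by
        have : v ∈ B ∪ G ∪ Rsupp R := hcover ▸ Set.mem_univ v
        rcases this with (h | h) | h
        · exact absurd h hv
        · exact absurd h hvg
        · exact h
      obtain ⟨e1, he1, hue1⟩ := huR
      obtain ⟨e2, he2, hve2⟩ := hvR
      by_cases h12 : e1 = e2
      · subst h12
        have heq : e1 = s(u, v) := (Sym2.mem_and_mem_iff hadj.ne).mp ⟨hue1, hve2⟩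
        exact ⟨top e1, Or.inr ⟨e1, he1, rfl⟩, heq ▸ htop1 e1 he1⟩
      · have claim : ∀ a b : V, ∀ f1 f2 : Sym2 V, A.Adj a b → f1 ∈ R → f2 ∈ R → f1 ≠ f2 →
            a ∈ f1 → b ∈ f2 → A.dist r a + 1 = A.dist r b → top f2 = b := by
          intro a b f1 f2 hab hf1 hf2 hne12 haf1 hbf2 hdist
          have hPb : ∀ y ∈ f2, y ≠ b → A.dist r b + 1 = A.dist r y := by
            intro y hy hyb
            have hf2eq : f2 = s(y, b) := (Sym2.mem_and_mem_iff hyb).mp ⟨hy, hbf2⟩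
            have hyadj : A.Adj y b := (A.mem_edgeSet).mp (hf2eq ▸ hR hf2)
            have hya : y ≠ a := by
              rintro rfl
              exact hRm f1 hf1 f2 hf2 hne12 y ⟨haf1, hy⟩
            rcases adj_dist hA r hyadj with hd | hd
            · exact absurd (parent_unique hA r hyadj hab hd hdist) hya
            · exact hd
          by_contra htb
          have h1 := htop2 f2 hf2 b hbf2 (fun hbt => htb hbt.symm)
          have h2 := hPb (top f2) (htop1 f2 hf2) htb
          omega
        rcases adj_dist hA r hadj with hd | hd
        · have := claim u v e1 e2 hadj he1 he2 h12 hue1 hve2 hd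
          exact ⟨v, Or.inr ⟨e2, he2, this⟩, Sym2.mem_mk_right _ _⟩
        · have := claim v u e2 e1 hadj.symm he2 he1 (Ne.symm h12) hve2 hue1 hd
          exact ⟨u, Or.inr ⟨e1, he1, this⟩, Sym2.mem_mk_left _ _⟩
  have hCcard : C.ncard ≤ B.ncard + R.ncard :=
    le_trans (Set.ncard_union_le _ _)
      (Nat.add_le_add_left (Set.ncard_image_le (Set.toFinite _)) _)
  -- assembly
  have lb : ∀ n ∈ {n : ℕ | ∃ D : Set V, IsVC A D ∧ D.ncard = n}, B.ncard + R.ncard ≤ n := by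
    rintro n ⟨D, hD, rfl⟩
    calc B.ncard + R.ncard = M.ncard := hMcard.symm
      _ ≤ D.ncard := match_le_vc hMmatch hD
  have hCeq : C.ncard = B.ncard + R.ncard :=
    le_antisymm hCcard (lb _ ⟨C, hCvc, rfl⟩)
  have ub : ∀ n ∈ {n : ℕ | ∃ N : Set (Sym2 V), IsMatch A N ∧ N.ncard = n},
      n ≤ B.ncard + R.ncard := by
    rintro n ⟨N, hN, rfl⟩
    calc N.ncard ≤ C.ncard := match_le_vc hN hCvc
      _ = _ := hCeq
  constructor
  · exact le_antisymm (Nat.sInf_le ⟨C, hCvc, hCeq⟩) (le_csInf ⟨C.ncard, C, hCvc, rfl⟩ lb)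
  · exact le_antisymm (csSup_le ⟨M.ncard, M, hMmatch, rfl⟩ ub)
      (le_csSup ⟨B.ncard + R.ncard, ub⟩ ⟨M, hMmatch, hMcard⟩)
end

section
/- Let A be a finite tree and let M be a matching of A containing an edge {g₀, b₀} with g₀ ∈ G and b₀ ∈ B, where (B, R, G) is a tricoloring of A satisfying: B, G, and the endpoints of R partition the vertices; edges of R are pairwise non-adjacent; every edge with one endpoint in G has its other endpoint in B; every vertex of B has at least two neighbors in G. Then there exists a matching M' of A with |M'| = |M| not containing the edge {g₀, b₀}, and which differs from M only on edges of an alternating path g₀, b₀, g₁, b₁, ..., g_k, b_k, g_{k+1} with all g_i ∈ G and b_i ∈ B. -/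
variable {V : Type*} [Fintype V] [DecidableEq V]

section AuxRematch

open SimpleGraph

private lemma inj_snoc {α : Type*} {n : ℕ} {f : Fin n → α} {a : α}
    (hf : Function.Injective f) (ha : ∀ i, f i ≠ a) :
    Function.Injective (Fin.snoc f a : Fin (n+1) → α) := by
  intro i j hij
  by_cases hi : i = Fin.last n <;> by_cases hj : j = Fin.last n
  · rw [hi, hj]
  · obtain ⟨j', rfl⟩ := Fin.exists_castSucc_eq.mpr hj
    subst hi
    rw [Fin.snoc_last, Fin.snoc_castSucc] at hij
    exact absurd hij.symm (ha j')
  · obtain ⟨i', rfl⟩ := Fin.exists_castSucc_eq.mpr hi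
    subst hj
    rw [Fin.snoc_last, Fin.snoc_castSucc] at hij
    exact absurd hij (ha i')
  · obtain ⟨i', rfl⟩ := Fin.exists_castSucc_eq.mpr hi
    obtain ⟨j', rfl⟩ := Fin.exists_castSucc_eq.mpr hj
    rw [Fin.snoc_castSucc, Fin.snoc_castSucc] at hij
    exact congrArg Fin.castSucc (hf hij)

private lemma no_revisit {V : Type*} [DecidableEq V] {A : SimpleGraph V} (hA : A.IsAcyclic)
    {x z y g' : V} (h2 : A.Adj x z) (w₂ : A.Walk z y)
    (hw : (SimpleGraph.Walk.cons h2 w₂).IsPath)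
    (hadj : A.Adj x g') (hne : g' ≠ z) :
    g' ∉ (SimpleGraph.Walk.cons h2 w₂).support := by
  intro hmem
  set w : A.Walk x y := SimpleGraph.Walk.cons h2 w₂ with hwdef
  have hp1 : (SimpleGraph.Walk.cons hadj.symm (SimpleGraph.Walk.nil) : A.Walk g' x).IsPath := by
    simp [SimpleGraph.Walk.IsPath.nil, hadj.symm.ne]
  have hp2 : ((w.takeUntil g' hmem).reverse : A.Walk g' x).IsPath :=
    (hw.takeUntil hmem).reverse
  have hEq := SimpleGraph.isAcyclic_iff_path_unique.mp hA
    ⟨SimpleGraph.Walk.cons hadj.symm SimpleGraph.Walk.nil, hp1⟩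
    ⟨(w.takeUntil g' hmem).reverse, hp2⟩
  have hsup : ((w.takeUntil g' hmem).reverse).support = [g', x] := by
    have := congrArg (fun p : A.Path g' x => p.1.support) hEq
    simpa using this.symm
  have h3 : (w.takeUntil g' hmem).support = [x, g'] := by
    have := congrArg List.reverse hsup
    simpa [SimpleGraph.Walk.support_reverse] using this
  have h5 : w.support = [x, g'] ++ (w.dropUntil g' hmem).support.tail := by
    rw [← h3, ← SimpleGraph.Walk.support_append, SimpleGraph.Walk.take_spec]
  have h6 : w.support = x :: w₂.support := SimpleGraph.Walk.support_cons h2 w₂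
  rw [w₂.support_eq_cons] at h6
  rw [h6] at h5
  simp only [List.cons_append, List.nil_append, List.cons.injEq, true_and] at h5
  exact hne h5.1.symm

private lemma ncard_range_fin {α : Type*} {n : ℕ} {f : Fin n → α}
    (hf : Function.Injective f) : (Set.range f).ncard = n := by
  rw [← Nat.card_coe_set_eq, Nat.card_range_of_injective hf]
  simp


private lemma aux_rematch {V : Type*} [Fintype V] [DecidableEq V]
    (A : SimpleGraph V) (hA : A.IsTree)
    (B : Set V) (G : Set V)
    (hBG : Disjoint B G)
    (hGB : ∀ v w : V, A.Adj v w → v ∈ G → w ∈ B)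
    (hB2 : ∀ b ∈ B, 2 ≤ (A.neighborSet b ∩ G).ncard)
    (M : Set (Sym2 V)) (hM : IsMatch A M) (g₀ b₀ : V) :
    ∀ (n k : ℕ), k + n = Fintype.card V →
    ∀ (gs : Fin (k+1) → V) (bs : Fin (k+1) → V),
    gs 0 = g₀ → bs 0 = b₀ →
    Function.Injective gs → Function.Injective bs →
    (∀ i, gs i ∈ G) → (∀ i, bs i ∈ B) →
    (∀ i, s(gs i, bs i) ∈ M) →
    (∀ i : Fin k, A.Adj (bs i.castSucc) (gs i.succ)) →
    ∀ (xb xg : V), bs (Fin.last k) = xb → gs (Fin.last k) = xg →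
    ∀ (h2 : A.Adj xb xg) (w₂ : A.Walk xg g₀),
    (SimpleGraph.Walk.cons h2 w₂).IsPath →
    (∀ v, v ∈ (SimpleGraph.Walk.cons h2 w₂).support ↔ ∃ i, v = gs i ∨ v = bs i) →
    ∃ (k : ℕ) (gs : Fin (k + 2) → V) (bs : Fin (k + 1) → V) (M' : Set (Sym2 V)),
      gs 0 = g₀ ∧ bs 0 = b₀ ∧
      Function.Injective gs ∧ Function.Injective bs ∧
      (∀ i : Fin (k + 2), gs i ∈ G) ∧ (∀ i : Fin (k + 1), bs i ∈ B) ∧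
      (∀ i : Fin (k + 1), s(gs i.castSucc, bs i) ∈ M) ∧
      (∀ i : Fin (k + 1), A.Adj (bs i) (gs i.succ)) ∧
      M' = (M \ {e | ∃ i : Fin (k + 1), e = s(gs i.castSucc, bs i)}) ∪
            {e | ∃ i : Fin (k + 1), e = s(bs i, gs i.succ)} ∧
      IsMatch A M' ∧ M'.ncard = M.ncard ∧ s(g₀, b₀) ∉ M' := by
  intro n
  induction n with
  | zero =>
    intro k hk gs bs hg0 hb0 hgsInj hbsInj hgsG hbsB hMe hWe
    exfalso
    have hinj : Function.Injective (Sum.elim gs bs : Fin (k+1) ⊕ Fin (k+1) → V) := by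
      intro a b hab
      match a, b with
      | Sum.inl a, Sum.inl b => exact congrArg Sum.inl (hgsInj hab)
      | Sum.inr a, Sum.inr b => exact congrArg Sum.inr (hbsInj hab)
      | Sum.inl a, Sum.inr b =>
        simp only [Sum.elim_inl, Sum.elim_inr] at hab
        exact absurd (hgsG a) (Set.disjoint_left.mp hBG (hab ▸ hbsB b))
      | Sum.inr a, Sum.inl b =>
        simp only [Sum.elim_inl, Sum.elim_inr] at hab
        exact absurd (hgsG b) (Set.disjoint_left.mp hBG (hab ▸ hbsB a))
    have hcard := Fintype.card_le_of_injective _ hinj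
    simp [Fintype.card_sum] at hcard
    omega
  | succ n ih =>
    intro k hk gs bs hg0 hb0 hgsInj hbsInj hgsG hbsB hMe hWe xb xg hxb hxg h2 w₂ hw hsupp
    subst hxb; subst hxg
    -- pick a second G-neighbor g' of bs (last k)
    have h2le : 2 ≤ (A.neighborSet (bs (Fin.last k)) ∩ G).ncard := hB2 _ (hbsB _)
    obtain ⟨g', hg'mem, hg'ne⟩ :=
      Set.exists_ne_of_one_lt_ncard (s := A.neighborSet (bs (Fin.last k)) ∩ G)
        (by omega) (gs (Fin.last k))
    rw [Set.mem_inter_iff, SimpleGraph.mem_neighborSet] at hg'mem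
    obtain ⟨hadj, hg'G⟩ := hg'mem
    have hg'nsupp : g' ∉ (SimpleGraph.Walk.cons h2 w₂).support :=
      no_revisit hA.2 h2 w₂ hw hadj hg'ne
    have hg'gs : ∀ i, gs i ≠ g' := fun i h => hg'nsupp ((hsupp g').mpr ⟨i, Or.inl h.symm⟩)
    have hg'bs : ∀ i, bs i ≠ g' := fun i h => hg'nsupp ((hsupp g').mpr ⟨i, Or.inr h.symm⟩)
    have hsnocInj : Function.Injective (Fin.snoc gs g' : Fin (k+2) → V) :=
      inj_snoc hgsInj hg'gs
    have hsnocG : ∀ i : Fin (k+2), (Fin.snoc gs g' : Fin (k+2) → V) i ∈ G := by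
      intro i
      induction i using Fin.lastCases with
      | last => rw [Fin.snoc_last]; exact hg'G
      | cast j => rw [Fin.snoc_castSucc]; exact hgsG j
    have huniqB : ∀ e ∈ M, ∀ i : Fin (k+1), bs i ∈ e → e = s(gs i, bs i) := by
      intro e he i hbe
      by_contra hne'
      exact hM.2 e he _ (hMe i) hne' (bs i) ⟨hbe, Sym2.mem_mk_right _ _⟩
    have huniqG : ∀ e ∈ M, ∀ i : Fin (k+1), gs i ∈ e → e = s(gs i, bs i) := by
      intro e he i hbe
      by_contra hne'
      exact hM.2 e he _ (hMe i) hne' (gs i) ⟨hbe, Sym2.mem_mk_left _ _⟩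
    by_cases hmat : ∃ e ∈ M, g' ∈ e
    · -- g' is matched: extend the path and recurse
      obtain ⟨e, heM, hge⟩ := hmat
      obtain ⟨b', rfl⟩ := Sym2.mem_iff_exists.mp hge
      have hadj' : A.Adj g' b' := A.mem_edgeSet.mp (hM.1 heM)
      have hb'B : b' ∈ B := hGB g' b' hadj' hg'G
      have hb'ne : ∀ i, bs i ≠ b' := by
        intro i h
        by_cases heq : s(g', b') = s(gs i, bs i)
        · rcases Sym2.eq_iff.mp heq with ⟨h1, _⟩ | ⟨h1, _⟩
          · exact hg'gs i h1.symm
          · exact Set.disjoint_left.mp hBG (h1 ▸ hbsB i) hg'G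
        · have hbmem : bs i ∈ s(g', b') := by rw [h]; exact Sym2.mem_mk_right g' b'
          exact hM.2 _ heM _ (hMe i) heq (bs i) ⟨hbmem, Sym2.mem_mk_right _ _⟩
      have hb'g' : b' ≠ g' := fun h => Set.disjoint_left.mp hBG hb'B (h ▸ hg'G)
      have hb'nsupp : b' ∉ (SimpleGraph.Walk.cons h2 w₂).support := by
        intro h
        rcases (hsupp b').mp h with ⟨i, hi | hi⟩
        · exact Set.disjoint_left.mp hBG hb'B (hi ▸ hgsG i)
        · exact hb'ne i hi.symm
      refine ih (k+1) (by omega) (Fin.snoc gs g') (Fin.snoc bs b') ?_ ?_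
        hsnocInj (inj_snoc hbsInj hb'ne) hsnocG ?_ ?_ ?_ b' g' (by simp) (by simp)
        hadj'.symm (SimpleGraph.Walk.cons hadj.symm (SimpleGraph.Walk.cons h2 w₂)) ?_ ?_
      · rw [← Fin.castSucc_zero, Fin.snoc_castSucc]; exact hg0
      · rw [← Fin.castSucc_zero, Fin.snoc_castSucc]; exact hb0
      · intro i
        induction i using Fin.lastCases with
        | last => rw [Fin.snoc_last]; exact hb'B
        | cast j => rw [Fin.snoc_castSucc]; exact hbsB j
      · intro i
        induction i using Fin.lastCases with
        | last => rw [Fin.snoc_last, Fin.snoc_last]; exact heM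
        | cast j => rw [Fin.snoc_castSucc, Fin.snoc_castSucc]; exact hMe j
      · intro i
        rw [Fin.snoc_castSucc]
        induction i using Fin.lastCases with
        | last => rw [Fin.succ_last, Fin.snoc_last]; exact hadj
        | cast j => rw [Fin.succ_castSucc, Fin.snoc_castSucc]; exact hWe j
      · refine SimpleGraph.Walk.IsPath.cons (SimpleGraph.Walk.IsPath.cons hw hg'nsupp) ?_
        rw [SimpleGraph.Walk.support_cons]
        simp only [List.mem_cons]
        rintro (h | h)
        · exact hb'g' h
        · exact hb'nsupp h
      · intro v
        rw [SimpleGraph.Walk.support_cons, SimpleGraph.Walk.support_cons]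
        simp only [List.mem_cons]
        constructor
        · rintro (rfl | rfl | h)
          · exact ⟨Fin.last (k+1), Or.inr (by simp)⟩
          · exact ⟨Fin.last (k+1), Or.inl (by simp)⟩
          · obtain ⟨i, hi⟩ := (hsupp v).mp h
            exact ⟨i.castSucc, by rcases hi with hi | hi <;> simp [hi]⟩
        · rintro ⟨i, hi⟩
          induction i using Fin.lastCases with
          | last =>
            simp only [Fin.snoc_last] at hi
            rcases hi with rfl | rfl
            · exact Or.inr (Or.inl rfl)
            · exact Or.inl rfl
          | cast j =>
            simp only [Fin.snoc_castSucc] at hi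
            exact Or.inr (Or.inr ((hsupp v).mpr ⟨j, hi⟩))
    · -- g' is unmatched: finish
      have hadjN : ∀ i : Fin (k+1), A.Adj (bs i) ((Fin.snoc gs g' : Fin (k+2) → V) i.succ) := by
        intro i
        induction i using Fin.lastCases with
        | last => rw [Fin.succ_last, Fin.snoc_last]; exact hadj
        | cast j => rw [Fin.succ_castSucc, Fin.snoc_castSucc]; exact hWe j
      have hsuccG : ∀ i : Fin (k+1), (Fin.snoc gs g' : Fin (k+2) → V) i.succ ∈ G :=
        fun i => hsnocG i.succ
      have hNnotM : ∀ i : Fin (k+1), s(bs i, (Fin.snoc gs g' : Fin (k+2) → V) i.succ) ∉ M := by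
        intro i hmem
        have h := huniqB _ hmem i (Sym2.mem_mk_left _ _)
        rcases Sym2.eq_iff.mp h with ⟨h1, _⟩ | ⟨_, h2'⟩
        · exact Set.disjoint_left.mp hBG (hbsB i) (by rw [h1]; exact hgsG i)
        · have hcc : (Fin.snoc gs g' : Fin (k+2) → V) i.succ = (Fin.snoc gs g' : Fin (k+2) → V) i.castSucc := by
            rw [h2', Fin.snoc_castSucc]
          have h3 := congrArg Fin.val (hsnocInj hcc)
          simp at h3
      have hmixed : ∀ e ∈ M,
          e ∉ {e : Sym2 V | ∃ i : Fin (k+1), e = s((Fin.snoc gs g' : Fin (k+2) → V) i.castSucc, bs i)} →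
          ∀ (i : Fin (k+1)) (v : V), v ∈ e →
            v ∈ s(bs i, (Fin.snoc gs g' : Fin (k+2) → V) i.succ) → False := by
        intro e he heD i v hv1 hv2
        rcases Sym2.mem_iff.mp hv2 with h | h
        · have := huniqB e he i (h ▸ hv1)
          exact heD ⟨i, by rw [Fin.snoc_castSucc]; exact this⟩
        · by_cases hi : i = Fin.last k
          · subst hi
            rw [Fin.succ_last, Fin.snoc_last] at h
            exact hmat ⟨e, he, h ▸ hv1⟩
          · obtain ⟨j, hj⟩ := Fin.exists_castSucc_eq.mpr hi
            rw [← hj, Fin.succ_castSucc, Fin.snoc_castSucc] at h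
            have := huniqG e he j.succ (h ▸ hv1)
            exact heD ⟨j.succ, by rw [Fin.snoc_castSucc]; exact this⟩
      have hDsub : {e : Sym2 V | ∃ i : Fin (k+1), e = s((Fin.snoc gs g' : Fin (k+2) → V) i.castSucc, bs i)} ⊆ M := by
        rintro e ⟨i, rfl⟩
        rw [Fin.snoc_castSucc]; exact hMe i
      have hDcard : ({e : Sym2 V | ∃ i : Fin (k+1), e = s((Fin.snoc gs g' : Fin (k+2) → V) i.castSucc, bs i)} : Set (Sym2 V)).ncard = k + 1 := by
        have hDeq : {e : Sym2 V | ∃ i : Fin (k+1), e = s((Fin.snoc gs g' : Fin (k+2) → V) i.castSucc, bs i)}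
            = Set.range (fun i : Fin (k+1) => s(gs i, bs i)) := by
          ext e
          simp only [Set.mem_setOf_eq, Set.mem_range, Fin.snoc_castSucc]
          exact ⟨fun ⟨i, hi⟩ => ⟨i, hi.symm⟩, fun ⟨i, hi⟩ => ⟨i, hi.symm⟩⟩
        rw [hDeq, ncard_range_fin]
        intro i j hij
        rcases Sym2.eq_iff.mp hij with ⟨ha, _⟩ | ⟨ha, _⟩
        · exact hgsInj ha
        · exact absurd (hgsG i) (Set.disjoint_left.mp hBG (by rw [ha]; exact hbsB j))
      have hNcard : ({e : Sym2 V | ∃ i : Fin (k+1), e = s(bs i, (Fin.snoc gs g' : Fin (k+2) → V) i.succ)} : Set (Sym2 V)).ncard = k + 1 := by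
        have hNeq : {e : Sym2 V | ∃ i : Fin (k+1), e = s(bs i, (Fin.snoc gs g' : Fin (k+2) → V) i.succ)}
            = Set.range (fun i : Fin (k+1) => s(bs i, (Fin.snoc gs g' : Fin (k+2) → V) i.succ)) := by
          ext e
          simp only [Set.mem_setOf_eq, Set.mem_range]
          exact ⟨fun ⟨i, hi⟩ => ⟨i, hi.symm⟩, fun ⟨i, hi⟩ => ⟨i, hi.symm⟩⟩
        rw [hNeq, ncard_range_fin]
        intro i j hij
        rcases Sym2.eq_iff.mp hij with ⟨ha, _⟩ | ⟨ha, _⟩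
        · exact hbsInj ha
        · exact absurd (hsuccG j) (Set.disjoint_left.mp hBG (by rw [← ha]; exact hbsB i))
      refine ⟨k, Fin.snoc gs g', bs, _, ?_, hb0, hsnocInj, hbsInj, hsnocG, hbsB, ?_, hadjN, rfl, ?_, ?_, ?_⟩
      · rw [← Fin.castSucc_zero, Fin.snoc_castSucc]; exact hg0
      · intro i; rw [Fin.snoc_castSucc]; exact hMe i
      · -- IsMatch
        constructor
        · intro e he
          rcases he with ⟨heM, _⟩ | ⟨i, rfl⟩
          · exact hM.1 heM
          · exact A.mem_edgeSet.mpr (hadjN i)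
        · rintro e he f hf hef v ⟨hve, hvf⟩
          simp only [Set.mem_union, Set.mem_diff, Set.mem_setOf_eq] at he hf
          rcases he with ⟨heM, heD⟩ | ⟨i, rfl⟩ <;> rcases hf with ⟨hfM, hfD⟩ | ⟨j, rfl⟩
          · exact hM.2 e heM f hfM hef v ⟨hve, hvf⟩
          · exact hmixed e heM heD j v hve hvf
          · exact hmixed f hfM hfD i v hvf hve
          · rcases Sym2.mem_iff.mp hve with h1 | h1 <;> rcases Sym2.mem_iff.mp hvf with h2 | h2
            · exact hef (by rw [hbsInj (h1.symm.trans h2)])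
            · exact Set.disjoint_left.mp hBG (hbsB i) (by rw [h1.symm.trans h2]; exact hsuccG j)
            · exact Set.disjoint_left.mp hBG (hbsB j) (by rw [h2.symm.trans h1]; exact hsuccG i)
            · exact hef (by rw [Fin.succ_inj.mp (hsnocInj (h1.symm.trans h2))])
      · -- cardinality
        have hdisj : Disjoint
            (M \ {e : Sym2 V | ∃ i : Fin (k+1), e = s((Fin.snoc gs g' : Fin (k+2) → V) i.castSucc, bs i)})
            {e : Sym2 V | ∃ i : Fin (k+1), e = s(bs i, (Fin.snoc gs g' : Fin (k+2) → V) i.succ)} := by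
          rw [Set.disjoint_right]
          rintro e ⟨i, rfl⟩ ⟨heM, _⟩
          exact hNnotM i heM
        rw [Set.ncard_union_eq hdisj (Set.toFinite _) (Set.toFinite _),
          Set.ncard_diff hDsub (Set.toFinite _), hDcard, hNcard]
        have hle : k + 1 ≤ M.ncard := hDcard ▸ Set.ncard_le_ncard hDsub (Set.toFinite _)
        omega
      · -- the old edge is gone
        rintro (⟨-, hD⟩ | ⟨i, hi⟩)
        · exact hD ⟨0, by rw [Fin.snoc_castSucc, hg0, hb0]⟩
        · rcases Sym2.eq_iff.mp hi with ⟨h1, _⟩ | ⟨h1, _⟩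
          · exact Set.disjoint_left.mp hBG (hbsB i) (by rw [← h1, ← hg0]; exact hgsG 0)
          · have hcc : (Fin.snoc gs g' : Fin (k+2) → V) (Fin.castSucc 0) = (Fin.snoc gs g' : Fin (k+2) → V) i.succ := by
              rw [Fin.snoc_castSucc, hg0, h1]
            have h3 := congrArg Fin.val (hsnocInj hcc)
            simp at h3


end AuxRematch

theorem alternating_path_rematch (A : SimpleGraph V) (hA : A.IsTree)
    (B : Set V) (R : Set (Sym2 V)) (G : Set V) (hBC : IsBColoring A B R G)
    (M : Set (Sym2 V)) (hM : IsMatch A M)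
    (g₀ b₀ : V) (hg₀ : g₀ ∈ G) (hb₀ : b₀ ∈ B) (he₀ : s(g₀, b₀) ∈ M) :
    ∃ (k : ℕ) (gs : Fin (k + 2) → V) (bs : Fin (k + 1) → V) (M' : Set (Sym2 V)),
      gs 0 = g₀ ∧ bs 0 = b₀ ∧
      Function.Injective gs ∧ Function.Injective bs ∧
      (∀ i : Fin (k + 2), gs i ∈ G) ∧ (∀ i : Fin (k + 1), bs i ∈ B) ∧
      (∀ i : Fin (k + 1), s(gs i.castSucc, bs i) ∈ M) ∧
      (∀ i : Fin (k + 1), A.Adj (bs i) (gs i.succ)) ∧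
      M' = (M \ {e | ∃ i : Fin (k + 1), e = s(gs i.castSucc, bs i)}) ∪
            {e | ∃ i : Fin (k + 1), e = s(bs i, gs i.succ)} ∧
      IsMatch A M' ∧ M'.ncard = M.ncard ∧ s(g₀, b₀) ∉ M' := by
  obtain ⟨-, -, hBGd, -, -, -, hGB, hB2⟩ := hBC
  have hadj : A.Adj g₀ b₀ := A.mem_edgeSet.mp (hM.1 he₀)
  refine aux_rematch A hA B G hBGd hGB hB2 M hM g₀ b₀ (Fintype.card V) 0 (by omega)
    (fun _ => g₀) (fun _ => b₀) rfl rfl (fun a b _ => Fin.ext (by omega))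
    (fun a b _ => Fin.ext (by omega)) (fun _ => hg₀) (fun _ => hb₀)
    (fun _ => he₀) (fun i => i.elim0) b₀ g₀ rfl rfl hadj.symm SimpleGraph.Walk.nil ?_ ?_
  · simp [SimpleGraph.Walk.IsPath.nil, hadj.symm.ne]
  · intro v
    rw [SimpleGraph.Walk.support_cons]
    simp only [SimpleGraph.Walk.support_nil, List.mem_cons, List.mem_singleton,
      List.not_mem_nil, or_false]
    constructor
    · rintro (rfl | rfl)
      · exact ⟨0, Or.inr rfl⟩
      · exact ⟨0, Or.inl rfl⟩
    · rintro ⟨i, rfl | rfl⟩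
      · exact Or.inr rfl
      · exact Or.inl rfl
end

section
/- In a finite tree with b-coloring (B, R, G), the set of vertices left unmatched by some maximum matching is exactly G, and the set of vertices matched by every maximum matching but with no fixed incident matched edge is exactly B; the edges belonging to every maximum matching are exactly those of R. -/
variable {V : Type*} [Fintype V] [DecidableEq V]

section BBauxSection
open SimpleGraph Set
set_option linter.unusedSectionVars false
namespace BBaux
variable {V : Type*} [Fintype V] [DecidableEq V] {A : SimpleGraph V}

noncomputable def tw (hA : A.IsTree) (r v : V) : A.Walk v r :=
  (hA.existsUnique_path v r).choose

lemma tw_isPath (hA : A.IsTree) (r v : V) : (tw hA r v).IsPath :=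
  (hA.existsUnique_path v r).choose_spec.1

lemma tw_eq (hA : A.IsTree) {r v : V} (q : A.Walk v r) (hq : q.IsPath) : q = tw hA r v :=
  (hA.existsUnique_path v r).choose_spec.2 q hq

noncomputable def par (hA : A.IsTree) (r v : V) : V := (tw hA r v).getVert 1

lemma parent_char (hA : A.IsTree) {r v u : V} (h : A.Adj v u)
    (hs : v ∉ (tw hA r u).support) :
    v ≠ r ∧ par hA r v = u ∧ (tw hA r v).length = (tw hA r u).length + 1 := by
  have hw : (SimpleGraph.Walk.cons h (tw hA r u)).IsPath := by
    rw [SimpleGraph.Walk.cons_isPath_iff]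
    exact ⟨tw_isPath hA r u, hs⟩
  have he := tw_eq hA _ hw
  refine ⟨?_, ?_, ?_⟩
  · intro hvr
    exact hs (hvr ▸ (tw hA r u).end_mem_support)
  · rw [par, ← he, SimpleGraph.Walk.getVert_cons_succ, SimpleGraph.Walk.getVert_zero]
  · rw [← he, SimpleGraph.Walk.length_cons]

lemma not_mem_support (hA : A.IsTree) {r a b : V} (hab : A.Adj a b)
    (ha : a ∈ (tw hA r b).support) : b ∉ (tw hA r a).support := by
  intro hb
  have hp := tw_isPath hA r a
  have hspec := (tw hA r a).take_spec hb
  set q1 := (tw hA r a).takeUntil b hb with hq1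
  set d1 := (tw hA r a).dropUntil b hb with hd1
  have hd1p : d1.IsPath := hp.dropUntil hb
  have hd1eq : d1 = tw hA r b := tw_eq hA d1 hd1p
  have haind : a ∈ d1.support := by rw [hd1eq]; exact ha
  have hnd : ((tw hA r a).support).Nodup := hp.support_nodup
  rw [← hspec, SimpleGraph.Walk.support_append] at hnd
  rw [List.nodup_append] at hnd
  have ha1 : a ∈ q1.support := q1.start_mem_support
  have ha2 : a ∈ d1.support.tail := by
    have := d1.support_eq_cons
    rw [this] at haind
    rcases List.mem_cons.mp haind with h | h
    · exact absurd h hab.ne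
    · exact h
  exact hnd.2.2 a ha1 a ha2 rfl

lemma edge_far (hA : A.IsTree) (r : V) {e : Sym2 V} (he : e ∈ A.edgeSet) :
    ∃ v u, e = s(v, u) ∧ v ≠ r ∧ par hA r v = u ∧
      (tw hA r v).length = (tw hA r u).length + 1 := by
  induction e with
  | _ a b =>
    have hab : A.Adj a b := he
    by_cases hmem : a ∈ (tw hA r b).support
    · have hb := not_mem_support hA hab hmem
      obtain ⟨h1, h2, h3⟩ := parent_char hA hab.symm hb
      exact ⟨b, a, Sym2.eq_swap, h1, h2, h3⟩
    · obtain ⟨h1, h2, h3⟩ := parent_char hA hab hmem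
      exact ⟨a, b, rfl, h1, h2, h3⟩

lemma edges_within_lt (hA : A.IsTree) (W : Set V) (hW : W.Nonempty) :
    {e : Sym2 V | e ∈ A.edgeSet ∧ ∀ v ∈ e, v ∈ W}.ncard < W.ncard := by
  classical
  obtain ⟨r, hr⟩ := hW
  set E := {e : Sym2 V | e ∈ A.edgeSet ∧ ∀ v ∈ e, v ∈ W} with hE
  set f : Sym2 V → V := fun e =>
    if h : e ∈ A.edgeSet then (edge_far hA r h).choose else r with hf
  have key : ∀ e ∈ E, f e ∈ W \ {r} ∧ e = s(f e, par hA r (f e)) := by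
    rintro e ⟨heA, heW⟩
    have hfe : f e = (edge_far hA r heA).choose := by simp [hf, heA]
    obtain ⟨u, h1, h2, h3, _⟩ := (edge_far hA r heA).choose_spec
    rw [← hfe] at h1 h2 h3
    refine ⟨⟨heW _ (Sym2.mem_iff_exists.mpr ⟨u, h1⟩), h2⟩, by rw [h3, ← h1]⟩
  have hle : E.ncard ≤ (W \ {r}).ncard := by
    apply Set.ncard_le_ncard_of_injOn f (fun e he => (key e he).1)
    intro e1 h1 e2 h2 hfe
    exact ((key e1 h1).2.trans (by rw [hfe])).trans (key e2 h2).2.symm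
  refine lt_of_le_of_lt hle (Set.ncard_lt_ncard ?_ W.toFinite)
  exact (Set.ssubset_iff_of_subset Set.diff_subset).mpr ⟨r, hr, by simp⟩

lemma exists_leaf (hA : A.IsTree) (W : Set V) (hW : W.Nonempty) :
    ∃ v ∈ W, (A.neighborSet v ∩ W).ncard ≤ 1 := by
  obtain ⟨r, hr⟩ := hW
  obtain ⟨v, hv, hmax⟩ :=
    Set.exists_max_image W (fun v => (tw hA r v).length) W.toFinite ⟨r, hr⟩
  refine ⟨v, hv, ?_⟩
  have hsub : A.neighborSet v ∩ W ⊆ {par hA r v} := by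
    rintro u ⟨hu, huW⟩
    have hadj : A.Adj v u := hu
    have he : s(v, u) ∈ A.edgeSet := hadj
    obtain ⟨x, y, hxy, hxr, hpar, hlen⟩ := edge_far hA r he
    rw [Sym2.eq_iff] at hxy
    rcases hxy with ⟨hx, hy⟩ | ⟨hx, hy⟩
    · subst hx; subst hy; simp [hpar]
    · have h4 : (tw hA r u).length ≤ (tw hA r v).length := hmax u huW
      rw [← hx, ← hy] at hlen
      omega
  calc (A.neighborSet v ∩ W).ncard ≤ ({par hA r v} : Set V).ncard :=
        Set.ncard_le_ncard hsub (Set.toFinite _)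
    _ = 1 := Set.ncard_singleton _

def IsPM (A : SimpleGraph V) (W : Set V) (R : Set (Sym2 V)) : Prop :=
  R ⊆ A.edgeSet ∧ (∀ e ∈ R, ∀ f ∈ R, e ≠ f → ∀ v : V, ¬(v ∈ e ∧ v ∈ f)) ∧
  (∀ v : V, v ∈ W ↔ ∃ e ∈ R, v ∈ e)

lemma sym2_exists_mem (e : Sym2 V) : ∃ x, x ∈ e := by
  induction e with | _ a b => exact ⟨a, Sym2.mem_mk_left a b⟩

lemma pm_empty {R : Set (Sym2 V)} (hPM : IsPM A ∅ R) : R = ∅ := by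
  ext e
  simp only [Set.mem_empty_iff_false, iff_false]
  intro he
  obtain ⟨x, hx⟩ := sym2_exists_mem e
  exact absurd ((hPM.2.2 x).mpr ⟨e, he, hx⟩) (Set.notMem_empty x)

lemma pm_remove {W : Set V} {R : Set (Sym2 V)} (hPM : IsPM A W R) {e : Sym2 V}
    (heR : e ∈ R) {v u : V} (hvu : s(v, u) = e) :
    IsPM A (W \ {v, u}) (R \ {e}) := by
  obtain ⟨hsub, hpw, hsupp⟩ := hPM
  have hmem : ∀ x : V, x ∈ e ↔ (x = v ∨ x = u) := by
    intro x; rw [← hvu, Sym2.mem_iff]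
  refine ⟨fun f hf => hsub hf.1, fun f hf g hg hfg x => hpw f hf.1 g hg.1 hfg x, fun x => ?_⟩
  constructor
  · rintro ⟨hxW, hx2⟩
    obtain ⟨f, hfR, hxf⟩ := (hsupp x).mp hxW
    refine ⟨f, ⟨hfR, ?_⟩, hxf⟩
    intro hfe
    rw [Set.mem_singleton_iff] at hfe
    subst hfe
    exact hx2 ((hmem x).mp hxf)
  · rintro ⟨f, ⟨hfR, hfe⟩, hxf⟩
    rw [Set.mem_singleton_iff] at hfe
    refine ⟨(hsupp x).mpr ⟨f, hfR, hxf⟩, ?_⟩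
    rintro (rfl | rfl)
    · exact hpw f hfR e heR hfe x ⟨hxf, (hmem x).mpr (Or.inl rfl)⟩
    · exact hpw f hfR e heR hfe x ⟨hxf, (hmem x).mpr (Or.inr rfl)⟩

lemma pm_ncard_drop {W : Set V} {v u : V} (hv : v ∈ W) (hu : u ∈ W) (hne : v ≠ u) :
    (W \ {v, u}).ncard + 2 = W.ncard := by
  have h1 : W \ {v, u} = (W \ {v}) \ {u} := by
    rw [Set.diff_diff, Set.singleton_union]
  have hu' : u ∈ W \ {v} := ⟨hu, by simp [hne.symm]⟩
  rw [h1]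
  have e1 : ((W \ {v}) \ {u}).ncard + 1 = (W \ {v}).ncard :=
    Set.ncard_diff_singleton_add_one hu' (Set.toFinite _)
  have e2 : (W \ {v}).ncard + 1 = W.ncard :=
    Set.ncard_diff_singleton_add_one hv W.toFinite
  omega

/-- data for the leaf step -/
lemma pm_leaf_step (hA : A.IsTree) {W : Set V} {R : Set (Sym2 V)} (hPM : IsPM A W R)
    (hW : W.Nonempty) :
    ∃ v u e, v ∈ W ∧ u ∈ W ∧ v ≠ u ∧ e ∈ R ∧ s(v, u) = e ∧ A.Adj v u ∧
      (∀ z, A.Adj v z → z ∈ W → z = u) := by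
  obtain ⟨v, hv, hleaf⟩ := exists_leaf hA W hW
  obtain ⟨e, heR, hve⟩ := (hPM.2.2 v).mp hv
  have heE : e ∈ A.edgeSet := hPM.1 heR
  set u := Sym2.Mem.other' hve with hu
  have hspec : s(v, u) = e := Sym2.other_spec' hve
  have huW : u ∈ W := (hPM.2.2 u).mpr ⟨e, heR, Sym2.other_mem' hve⟩
  have hvu : v ≠ u := by
    have h2 := Sym2.other_ne (A.not_isDiag_of_mem_edgeSet heE) hve
    rw [Sym2.other_eq_other'] at h2
    exact (Ne.symm h2)
  have hadj : A.Adj v u := by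
    rw [← SimpleGraph.mem_edgeSet, hspec]; exact heE
  refine ⟨v, u, e, hv, huW, hvu, heR, hspec, hadj, ?_⟩
  intro z hz hzW
  exact (Set.ncard_le_one (Set.toFinite _)).mp hleaf z (Set.mem_inter hz hzW) u
    (Set.mem_inter hadj huW)

lemma pm_unique (hA : A.IsTree) :
    ∀ (n : ℕ) (W : Set V) (R1 R2 : Set (Sym2 V)), W.ncard ≤ n →
      IsPM A W R1 → IsPM A W R2 → R1 = R2 := by
  intro n
  induction n with
  | zero =>
    intro W R1 R2 hn h1 h2
    have hWe : W = ∅ := (Set.ncard_eq_zero W.toFinite).mp (Nat.le_zero.mp hn)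
    subst hWe
    rw [pm_empty h1, pm_empty h2]
  | succ n ih =>
    intro W R1 R2 hn h1 h2
    rcases W.eq_empty_or_nonempty with rfl | hW
    · rw [pm_empty h1, pm_empty h2]
    obtain ⟨v, u, e1, hv, hu, hvu, he1R, hs1, hadj, huniq⟩ := pm_leaf_step hA h1 hW
    obtain ⟨e2, he2R, hve2⟩ := (h2.2.2 v).mp hv
    -- the other endpoint of e2 is also a W-neighbour of v, hence equals u
    have he2E : e2 ∈ A.edgeSet := h2.1 he2R
    set u2 := Sym2.Mem.other' hve2 with hu2
    have hs2 : s(v, u2) = e2 := Sym2.other_spec' hve2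
    have hu2W : u2 ∈ W := (h2.2.2 u2).mpr ⟨e2, he2R, Sym2.other_mem' hve2⟩
    have hadj2 : A.Adj v u2 := by rw [← SimpleGraph.mem_edgeSet, hs2]; exact he2E
    have hu2u : u2 = u := huniq u2 hadj2 hu2W
    have hee : e1 = e2 := by rw [← hs1, ← hs2, hu2u]
    subst hee
    have hrec := ih (W \ {v, u}) (R1 \ {e1}) (R2 \ {e1})
      (by have := pm_ncard_drop hv hu hvu; omega)
      (pm_remove h1 he1R hs1) (pm_remove h2 he2R hs1)
    have g1 : R1 = insert e1 (R1 \ {e1}) :=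
      (Set.insert_diff_singleton.trans (Set.insert_eq_of_mem he1R)).symm
    have g2 : R2 = insert e1 (R2 \ {e1}) :=
      (Set.insert_diff_singleton.trans (Set.insert_eq_of_mem he2R)).symm
    rw [g1, g2, hrec]

lemma pm_selection (hA : A.IsTree) :
    ∀ (n : ℕ) (W : Set V) (R : Set (Sym2 V)), W.ncard ≤ n → IsPM A W R →
      ∃ S : Set V, S ⊆ W ∧ S.ncard = R.ncard ∧
        (∀ e ∈ R, ∃ v u, e = s(v, u) ∧ v ∈ S ∧ u ∉ S) ∧
        (∀ e ∈ A.edgeSet, (∀ x ∈ e, x ∈ W) → ∃ v ∈ e, v ∈ S) := by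
  intro n
  induction n with
  | zero =>
    intro W R hn hPM
    have hWe : W = ∅ := (Set.ncard_eq_zero W.toFinite).mp (Nat.le_zero.mp hn)
    subst hWe
    refine ⟨∅, Set.Subset.rfl, by rw [pm_empty hPM]; simp, ?_, ?_⟩
    · intro e he; rw [pm_empty hPM] at he; exact absurd he (Set.notMem_empty e)
    · intro e _ hin
      obtain ⟨x, hx⟩ := sym2_exists_mem e
      exact absurd (hin x hx) (Set.notMem_empty x)
  | succ n ih =>
    intro W R hn hPM
    rcases W.eq_empty_or_nonempty with rfl | hW
    · refine ⟨∅, Set.Subset.rfl, by rw [pm_empty hPM]; simp, ?_, ?_⟩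
      · intro e he; rw [pm_empty hPM] at he; exact absurd he (Set.notMem_empty e)
      · intro e _ hin
        obtain ⟨x, hx⟩ := sym2_exists_mem e
        exact absurd (hin x hx) (Set.notMem_empty x)
    obtain ⟨v, u, e, hv, hu, hvu, heR, hs, hadj, huniq⟩ := pm_leaf_step hA hPM hW
    obtain ⟨S', hS'W, hS'card, hS'one, hS'cov⟩ := ih (W \ {v, u}) (R \ {e})
      (by have := pm_ncard_drop hv hu hvu; omega) (pm_remove hPM heR hs)
    have hvW' : v ∉ W \ {v, u} := by simp
    have huW' : u ∉ W \ {v, u} := by simp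
    have huS' : u ∉ S' := fun h => huW' (hS'W h)
    refine ⟨insert u S', ?_, ?_, ?_, ?_⟩
    · exact Set.insert_subset hu (hS'W.trans Set.diff_subset)
    · rw [Set.ncard_insert_of_notMem huS' (Set.toFinite _), hS'card,
        Set.ncard_diff_singleton_add_one heR (Set.toFinite _)]
    · intro f hfR
      by_cases hfe : f = e
      · subst hfe
        refine ⟨u, v, by rw [← hs, Sym2.eq_swap], Set.mem_insert u S', ?_⟩
        intro hvS
        rcases Set.mem_insert_iff.mp hvS with h | h
        · exact hvu h
        · exact hvW' (hS'W h)
      · obtain ⟨v', u', hf, hv'S, hu'S⟩ := hS'one f ⟨hfR, hfe⟩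
        refine ⟨v', u', hf, Set.mem_insert_of_mem u hv'S, ?_⟩
        intro hu'S2
        rcases Set.mem_insert_iff.mp hu'S2 with h | h
        · -- u' = u, but u' ∈ W \ {v,u}
          have hu'W' : u' ∈ W \ {v, u} :=
            ((pm_remove hPM heR hs).2.2 u').mpr ⟨f, ⟨hfR, hfe⟩, by rw [hf]; exact Sym2.mem_mk_right _ _⟩
          rw [h] at hu'W'
          exact huW' hu'W'
        · exact hu'S h
    · intro g hgE hgin
      by_cases hug : u ∈ g
      · exact ⟨u, hug, Set.mem_insert u S'⟩
      by_cases hvg : v ∈ g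
      · -- other endpoint of g at v must be u
        have hz := Sym2.other_mem' hvg
        set z := Sym2.Mem.other' hvg with hzdef
        have hsz : s(v, z) = g := Sym2.other_spec' hvg
        have hadjz : A.Adj v z := by rw [← SimpleGraph.mem_edgeSet, hsz]; exact hgE
        have hzu : z = u := huniq z hadjz (hgin z hz)
        rw [hzu] at hz
        exact absurd hz hug
      · -- g is inside W \ {v, u}
        have hgin' : ∀ x ∈ g, x ∈ W \ {v, u} := by
          intro x hx
          refine ⟨hgin x hx, ?_⟩
          rintro (rfl | rfl)
          · exact hvg hx
          · exact hug hx
        obtain ⟨w, hwg, hwS⟩ := hS'cov g hgE hgin'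
        exact ⟨w, hwg, Set.mem_insert_of_mem u hwS⟩


open Classical in
noncomputable def pick (C : Set V) (e : Sym2 V) : V :=
  if h : ∃ v, v ∈ C ∧ v ∈ e then h.choose else (Quot.out e).1

lemma pick_spec {C : Set V} {e : Sym2 V} (h : ∃ v ∈ C, v ∈ e) :
    pick C e ∈ C ∧ pick C e ∈ e := by
  have h' : ∃ v, v ∈ C ∧ v ∈ e := h
  rw [pick, dif_pos h']
  exact h'.choose_spec

lemma match_le_vc {M : Set (Sym2 V)} {C : Set V} (hM : IsMatch A M) (hC : IsVC A C) :
    M.ncard ≤ C.ncard := by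
  apply Set.ncard_le_ncard_of_injOn (pick C)
    (fun e he => (pick_spec (hC e (hM.1 he))).1)
  intro e1 h1 e2 h2 hp
  by_contra hne
  exact hM.2 e1 h1 e2 h2 hne (pick C e1)
    ⟨(pick_spec (hC e1 (hM.1 h1))).2, hp ▸ (pick_spec (hC e2 (hM.1 h2))).2⟩

lemma vc_exact {M : Set (Sym2 V)} {C : Set V} (hM : IsMatch A M) (hC : IsVC A C)
    (hle : C.ncard ≤ M.ncard) :
    (∀ c ∈ C, ∃ e ∈ M, c ∈ e) ∧
    (∀ e ∈ M, ∀ c1 ∈ C, c1 ∈ e → ∀ c2 ∈ C, c2 ∈ e → c1 = c2) := by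
  have hsurj := Set.surj_on_of_inj_on_of_ncard_le (s := M) (t := C)
    (fun e _ => pick C e)
    (fun e he => (pick_spec (hC e (hM.1 he))).1)
    (fun e1 e2 h1 h2 hp => by
      have hp' : pick C e1 = pick C e2 := hp
      by_contra hne
      exact hM.2 e1 h1 e2 h2 hne (pick C e1)
        ⟨(pick_spec (hC e1 (hM.1 h1))).2, hp' ▸ (pick_spec (hC e2 (hM.1 h2))).2⟩)
    hle C.toFinite
  constructor
  · intro c hc
    obtain ⟨e, he, hce⟩ := hsurj c hc
    have hce' : c = pick C e := hce
    exact ⟨e, he, hce' ▸ (pick_spec (hC e (hM.1 he))).2⟩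
  · intro e he c1 hc1 hc1e c2 hc2 hc2e
    obtain ⟨e1, he1, hce1⟩ := hsurj c1 hc1
    obtain ⟨e2, he2, hce2⟩ := hsurj c2 hc2
    have hce1' : c1 = pick C e1 := hce1
    have hce2' : c2 = pick C e2 := hce2
    have hpc1 : c1 ∈ e1 := by rw [hce1']; exact (pick_spec (hC e1 (hM.1 he1))).2
    have hpc2 : c2 ∈ e2 := by rw [hce2']; exact (pick_spec (hC e2 (hM.1 he2))).2
    have h1 : e1 = e := by
      by_contra hne
      exact hM.2 e1 he1 e he hne c1 ⟨hpc1, hc1e⟩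
    have h2 : e2 = e := by
      by_contra hne
      exact hM.2 e2 he2 e he hne c2 ⟨hpc2, hc2e⟩
    rw [hce1', hce2', h1, h2]

lemma hallBG (hA : A.IsTree) (B G : Set V) (hdisj : Disjoint B G)
    (hdeg : ∀ b ∈ B, 2 ≤ (A.neighborSet b ∩ G).ncard) (g : V) (B' : Set V) (hB' : B' ⊆ B) :
    ∃ f : V → V, Set.InjOn f B' ∧ ∀ b ∈ B', A.Adj b (f b) ∧ f b ∈ G ∧ f b ≠ g := by
  classical
  set t : B' → Finset V := fun b => ((A.neighborFinset (b : V)) ∩ G.toFinset).erase g with ht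
  have hBnotG : ∀ x : V, x ∈ B → x ∉ G := fun x hx hxG =>
    Set.disjoint_left.mp hdisj hx hxG
  have hhall : ∀ s : Finset B', s.card ≤ (s.biUnion t).card := by
    intro s
    set Sv : Finset V := s.image Subtype.val with hSv
    have hSvcard : Sv.card = s.card := Finset.card_image_of_injective s Subtype.val_injective
    have hSvB : ∀ x ∈ Sv, x ∈ B := by
      intro x hx
      obtain ⟨b, _, rfl⟩ := Finset.mem_image.mp hx
      exact hB' b.2
    set N : Finset V := s.biUnion t with hN
    set W : Set V := ↑Sv ∪ ↑N ∪ {g} with hW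
    set E' : Finset (Sym2 V) :=
      Sv.biUnion (fun b => ((A.neighborFinset b) ∩ G.toFinset).image (fun x => s(b, x)))
      with hE'
    have hcardE' : 2 * s.card ≤ E'.card := by
      rw [hE', Finset.card_biUnion]
      · have hbnd : ∀ b ∈ Sv,
            2 ≤ (((A.neighborFinset b) ∩ G.toFinset).image (fun x => s(b, x))).card := by
          intro b hb
          have himg : (((A.neighborFinset b) ∩ G.toFinset).image (fun x => s(b, x))).card
              = ((A.neighborFinset b) ∩ G.toFinset).card := by
            apply Finset.card_image_of_injOn
            intro x1 hx1 x2 hx2 heq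
            rw [Sym2.eq_iff] at heq
            rcases heq with ⟨_, h⟩ | ⟨h1, h2⟩
            · exact h
            · exfalso
              apply hBnotG b (hSvB b hb)
              rw [h1]
              exact Set.mem_toFinset.mp (Finset.mem_inter.mp (Finset.mem_coe.mp hx2)).2
          have hfs : ((A.neighborFinset b) ∩ G.toFinset) = (A.neighborSet b ∩ G).toFinset := by
            rw [Set.toFinset_inter, SimpleGraph.neighborFinset_def]
          rw [himg, hfs, ← Set.ncard_eq_toFinset_card']
          exact hdeg b (hSvB b hb)
        calc 2 * s.card = 2 * Sv.card := by rw [hSvcard]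
          _ = ∑ _b ∈ Sv, 2 := by rw [Finset.sum_const, smul_eq_mul, mul_comm]
          _ ≤ ∑ b ∈ Sv, (((A.neighborFinset b) ∩ G.toFinset).image (fun x => s(b, x))).card :=
              Finset.sum_le_sum hbnd
      · intro b1 hb1 b2 hb2 hne
        simp only [Finset.disjoint_left]
        intro e he1 he2
        obtain ⟨x1, hx1, rfl⟩ := Finset.mem_image.mp he1
        obtain ⟨x2, hx2, heq⟩ := Finset.mem_image.mp he2
        rw [Sym2.eq_iff] at heq
        rcases heq with ⟨h1, _⟩ | ⟨h1, h2⟩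
        · exact hne (h1.symm)
        · apply hBnotG b2 (hSvB b2 (Finset.mem_coe.mp hb2))
          rw [h1]
          exact Set.mem_toFinset.mp (Finset.mem_inter.mp hx1).2
    have hsub : (↑E' : Set (Sym2 V)) ⊆ {e : Sym2 V | e ∈ A.edgeSet ∧ ∀ v ∈ e, v ∈ W} := by
      intro e he
      obtain ⟨b, hb, he2⟩ := Finset.mem_biUnion.mp (Finset.mem_coe.mp he)
      obtain ⟨x, hx, rfl⟩ := Finset.mem_image.mp he2
      have hxn := (Finset.mem_inter.mp hx).1
      have hxG := (Finset.mem_inter.mp hx).2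
      refine ⟨(SimpleGraph.mem_neighborFinset A b x).mp hxn, ?_⟩
      intro v hv
      rcases Sym2.mem_iff.mp hv with rfl | rfl
      · exact Or.inl (Or.inl (Finset.mem_coe.mpr hb))
      · by_cases hxg : v = g
        · exact Or.inr (hxg ▸ rfl)
        · refine Or.inl (Or.inr ?_)
          obtain ⟨b', hb', hbeq⟩ := Finset.mem_image.mp hb
          refine Finset.mem_coe.mpr (Finset.mem_biUnion.mpr ⟨b', hb', ?_⟩)
          show v ∈ ((A.neighborFinset (b' : V)) ∩ G.toFinset).erase g
          rw [hbeq]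
          exact Finset.mem_erase.mpr ⟨hxg, hx⟩
    have hWne : W.Nonempty := ⟨g, Or.inr rfl⟩
    have hlt := edges_within_lt hA W hWne
    have hE'le : E'.card ≤ {e : Sym2 V | e ∈ A.edgeSet ∧ ∀ v ∈ e, v ∈ W}.ncard := by
      rw [← Set.ncard_coe_finset]
      exact Set.ncard_le_ncard hsub (Set.toFinite _)
    have hWle : W.ncard ≤ s.card + N.card + 1 := by
      calc W.ncard ≤ (↑Sv ∪ ↑N : Set V).ncard + ({g} : Set V).ncard :=
            Set.ncard_union_le _ _
        _ ≤ ((↑Sv : Set V).ncard + (↑N : Set V).ncard) + 1 := by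
            rw [Set.ncard_singleton]
            exact Nat.add_le_add_right (Set.ncard_union_le _ _) 1
        _ = s.card + N.card + 1 := by
            rw [Set.ncard_coe_finset, Set.ncard_coe_finset, hSvcard]
    omega
  obtain ⟨f0, hf0inj, hf0mem⟩ :=
    (Finset.all_card_le_biUnion_card_iff_exists_injective t).mp hhall
  refine ⟨fun v => if h : v ∈ B' then f0 ⟨v, h⟩ else v, ?_, ?_⟩
  · intro x hx y hy hxy
    simp only [dif_pos hx, dif_pos hy] at hxy
    exact congrArg Subtype.val (hf0inj hxy)
  · intro b hb
    simp only [dif_pos hb]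
    have hmem0 := hf0mem ⟨b, hb⟩
    rw [ht] at hmem0
    obtain ⟨hne, hmem⟩ := Finset.mem_erase.mp hmem0
    obtain ⟨hn, hG⟩ := Finset.mem_inter.mp hmem
    exact ⟨(SimpleGraph.mem_neighborFinset A b _).mp hn, Set.mem_toFinset.mp hG, hne⟩


open Classical in
noncomputable def pickE (R : Set (Sym2 V)) (v : V) : Sym2 V :=
  if h : ∃ e, e ∈ R ∧ v ∈ e then h.choose else s(v, v)

lemma pickE_spec {R : Set (Sym2 V)} {v : V} (h : ∃ e ∈ R, v ∈ e) :
    pickE R v ∈ R ∧ v ∈ pickE R v := by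
  have h' : ∃ e, e ∈ R ∧ v ∈ e := h
  rw [pickE, dif_pos h']
  exact h'.choose_spec

lemma build_match {B G : Set V} {R : Set (Sym2 V)} (hRE : R ⊆ A.edgeSet)
    (hRpw : ∀ e ∈ R, ∀ f ∈ R, e ≠ f → ∀ v : V, ¬(v ∈ e ∧ v ∈ f))
    (hBW : Disjoint B (Rsupp R)) (hGW : Disjoint G (Rsupp R)) (hBG : Disjoint B G)
    {B'' : Set V} (hB''B : B'' ⊆ B) {f : V → V} (hinj : Set.InjOn f B'')
    (hf : ∀ b ∈ B'', A.Adj b (f b) ∧ f b ∈ G) :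
    IsMatch A (R ∪ (fun b => s(b, f b)) '' B'') ∧
    (R ∪ (fun b => s(b, f b)) '' B'').ncard = R.ncard + B''.ncard := by
  have hBnotW : ∀ x ∈ B, x ∉ Rsupp R := fun x hx => Set.disjoint_left.mp hBW hx
  have hGnotW : ∀ x ∈ G, x ∉ Rsupp R := fun x hx => Set.disjoint_left.mp hGW hx
  have hBnotG : ∀ x ∈ B, x ∉ G := fun x hx => Set.disjoint_left.mp hBG hx
  have himginj : Set.InjOn (fun b => s(b, f b)) B'' := by
    intro b1 h1 b2 h2 heq
    have heq' : s(b1, f b1) = s(b2, f b2) := heq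
    rw [Sym2.eq_iff] at heq'
    rcases heq' with ⟨h, _⟩ | ⟨h1', h2'⟩
    · exact h
    · exact absurd (h1' ▸ (hf b2 h2).2) (hBnotG b1 (hB''B h1))
  have hmatch : IsMatch A (R ∪ (fun b => s(b, f b)) '' B'') := by
    constructor
    · intro e he
      rcases he with he | he
      · exact hRE he
      · obtain ⟨b, hb, rfl⟩ := he
        exact (hf b hb).1
    · have hRF : ∀ e ∈ R, ∀ b ∈ B'', ∀ v : V, ¬(v ∈ e ∧ v ∈ s(b, f b)) := by
        rintro e he b hb v ⟨hv1, hv2⟩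
        have hvW : v ∈ Rsupp R := ⟨e, he, hv1⟩
        rcases Sym2.mem_iff.mp hv2 with h | h
        · exact hBnotW v (by rw [h]; exact hB''B hb) hvW
        · exact hGnotW v (by rw [h]; exact (hf b hb).2) hvW
      rintro e he ef hef hne v
      rcases he with he | he <;> rcases hef with hef | hef
      · exact hRpw e he ef hef hne v
      · obtain ⟨b, hb, rfl⟩ := hef
        exact hRF e he b hb v
      · obtain ⟨b, hb, rfl⟩ := he
        rintro ⟨hv1, hv2⟩
        exact hRF ef hef b hb v ⟨hv2, hv1⟩
      · obtain ⟨b1, hb1, rfl⟩ := he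
        obtain ⟨b2, hb2, rfl⟩ := hef
        rintro ⟨hv1, hv2⟩
        rcases Sym2.mem_iff.mp hv1 with h1 | h1 <;> rcases Sym2.mem_iff.mp hv2 with h2 | h2
        · exact hne (by rw [h1.symm.trans h2])
        · exact hBnotG b1 (hB''B hb1) ((h1.symm.trans h2) ▸ (hf b2 hb2).2)
        · exact hBnotG b2 (hB''B hb2) ((h2.symm.trans h1) ▸ (hf b1 hb1).2)
        · exact hne (by rw [hinj hb1 hb2 (h1.symm.trans h2)])
  have hdisjRF : Disjoint R ((fun b => s(b, f b)) '' B'') := by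
    rw [Set.disjoint_right]
    rintro e ⟨b, hb, rfl⟩ heR
    exact hBnotW b (hB''B hb) ⟨_, heR, Sym2.mem_mk_left _ _⟩
  refine ⟨hmatch, ?_⟩
  rw [Set.ncard_union_eq hdisjRF (toFinite _) (toFinite _),
    Set.ncard_image_of_injOn himginj]

end BBaux
end BBauxSection

theorem backbone_characterization (A : SimpleGraph V) (hA : A.IsTree)
    (B : Set V) (R : Set (Sym2 V)) (G : Set V) (hBC : IsBColoring A B R G) :
    {v : V | ∃ M : Set (Sym2 V), IsMaxMatch A M ∧ ∀ e ∈ M, v ∉ e} = G ∧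
    {v : V | (∀ M : Set (Sym2 V), IsMaxMatch A M → ∃ e ∈ M, v ∈ e) ∧
      ¬∃ e ∈ A.edgeSet, v ∈ e ∧ ∀ M : Set (Sym2 V), IsMaxMatch A M → e ∈ M} = B ∧
    {e : Sym2 V | e ∈ A.edgeSet ∧ ∀ M : Set (Sym2 V), IsMaxMatch A M → e ∈ M} = R := by
  classical
  obtain ⟨hRE, hpart, hBG, hBW, hGW, hRpw, hGnb, hdeg⟩ := hBC
  have htri : ∀ v : V, v ∈ B ∨ v ∈ G ∨ v ∈ Rsupp R := by
    intro v
    have hv : v ∈ B ∪ G ∪ Rsupp R := by rw [hpart]; exact Set.mem_univ v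
    rcases hv with (h | h) | h
    · exact Or.inl h
    · exact Or.inr (Or.inl h)
    · exact Or.inr (Or.inr h)
  have hBnotG : ∀ x ∈ B, x ∉ G := fun x hx => Set.disjoint_left.mp hBG hx
  have hBnotW : ∀ x ∈ B, x ∉ Rsupp R := fun x hx => Set.disjoint_left.mp hBW hx
  have hGnotW : ∀ x ∈ G, x ∉ Rsupp R := fun x hx => Set.disjoint_left.mp hGW hx
  have hPM : BBaux.IsPM A (Rsupp R) R := ⟨hRE, hRpw, fun v => Iff.rfl⟩
  obtain ⟨S, hSW, hScard, hSone, hScov⟩ :=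
    BBaux.pm_selection hA (Rsupp R).ncard (Rsupp R) R le_rfl hPM
  have hC0 : IsVC A (B ∪ S) := by
    intro e
    induction e with
    | _ a b =>
      intro heE
      have hadj : A.Adj a b := heE
      rcases htri a with ha | ha | ha
      · exact ⟨a, Or.inl ha, Sym2.mem_mk_left a b⟩
      · exact ⟨b, Or.inl (hGnb a b hadj ha), Sym2.mem_mk_right a b⟩
      · rcases htri b with hb | hb | hb
        · exact ⟨b, Or.inl hb, Sym2.mem_mk_right a b⟩
        · exact ⟨a, Or.inl (hGnb b a hadj.symm hb), Sym2.mem_mk_left a b⟩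
        · have hin : ∀ x ∈ s(a, b), x ∈ Rsupp R := by
            intro x hx
            rcases Sym2.mem_iff.mp hx with rfl | rfl
            · exact ha
            · exact hb
          obtain ⟨w, hwe, hwS⟩ := hScov s(a, b) heE hin
          exact ⟨w, Or.inr hwS, hwe⟩
  have hBSdisj : Disjoint B S := hBW.mono_right hSW
  have hC0card : (B ∪ S).ncard = B.ncard + R.ncard := by
    rw [Set.ncard_union_eq hBSdisj (Set.toFinite _) (Set.toFinite _), hScard]
  have hub : ∀ N : Set (Sym2 V), IsMatch A N → N.ncard ≤ R.ncard + B.ncard := by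
    intro N hN
    have h1 := BBaux.match_le_vc hN hC0
    rw [hC0card] at h1
    omega
  have hmax_of_card : ∀ M : Set (Sym2 V), IsMatch A M → M.ncard = R.ncard + B.ncard →
      IsMaxMatch A M := fun M hM hc => ⟨hM, fun N hN => by rw [hc]; exact hub N hN⟩
  have hVne : Nonempty V := hA.isConnected.nonempty
  obtain ⟨g0⟩ := hVne
  obtain ⟨f0, hf0inj, hf0spec⟩ := BBaux.hallBG hA B G hBG hdeg g0 B Set.Subset.rfl
  obtain ⟨hM0match, hM0card⟩ := BBaux.build_match hRE hRpw hBW hGW hBG Set.Subset.rfl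
    hf0inj (fun b hb => ⟨(hf0spec b hb).1, (hf0spec b hb).2.1⟩)
  set M0 := R ∪ (fun b => s(b, f0 b)) '' B with hM0def
  have hM0max : IsMaxMatch A M0 := hmax_of_card M0 hM0match hM0card
  have hmaxcard : ∀ M : Set (Sym2 V), IsMaxMatch A M → M.ncard = R.ncard + B.ncard :=
    fun M hM => le_antisymm (hub M hM.1) (hM0card ▸ hM.2 M0 hM0match)
  have hexact : ∀ M : Set (Sym2 V), IsMaxMatch A M →
      (∀ c ∈ B ∪ S, ∃ e ∈ M, c ∈ e) ∧
      (∀ e ∈ M, ∀ c1 ∈ B ∪ S, c1 ∈ e → ∀ c2 ∈ B ∪ S, c2 ∈ e → c1 = c2) := by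
    intro M hM
    exact BBaux.vc_exact hM.1 hC0 (by rw [hC0card, hmaxcard M hM]; omega)
  -- every maximum matching contains R
  have hRin : ∀ M : Set (Sym2 V), IsMaxMatch A M → R ⊆ M := by
    intro M hMmax
    obtain ⟨hcov, huniqC⟩ := hexact M hMmax
    have hM := hMmax.1
    have hmatchS : ∀ v ∈ S, ∃ z, s(v, z) ∈ M ∧ z ∈ Rsupp R \ S := by
      intro v hvS
      obtain ⟨e, heM, hve⟩ := hcov v (Or.inr hvS)
      set z := Sym2.Mem.other' hve with hz
      have hsz : s(v, z) = e := Sym2.other_spec' hve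
      have hzmem : z ∈ e := Sym2.other_mem' hve
      have hzv : z ≠ v := by
        have h2 := Sym2.other_ne (A.not_isDiag_of_mem_edgeSet (hM.1 heM)) hve
        rw [Sym2.other_eq_other'] at h2
        exact h2
      have hvW : v ∈ Rsupp R := hSW hvS
      have hzC : z ∉ B ∪ S := fun hzC => hzv (huniqC e heM z hzC hzmem v (Or.inr hvS) hve)
      have hadjvz : A.Adj v z := by rw [← SimpleGraph.mem_edgeSet, hsz]; exact hM.1 heM
      have hzW : z ∈ Rsupp R := by
        rcases htri z with h | h | h
        · exact absurd (Or.inl h) hzC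
        · exact absurd (hGnb z v hadjvz.symm h) (fun hvB => hBnotW v hvB hvW)
        · exact h
      exact ⟨z, by rw [hsz]; exact heM, hzW, fun h => hzC (Or.inr h)⟩
    have hWSle : (Rsupp R \ S).ncard ≤ S.ncard := by
      rw [hScard]
      apply Set.ncard_le_ncard_of_injOn (BBaux.pickE R)
        (fun x hx => (BBaux.pickE_spec ((hx.1 : x ∈ Rsupp R))).1)
      intro x1 hx1 x2 hx2 heq
      have hs1 := BBaux.pickE_spec ((hx1.1 : x1 ∈ Rsupp R))
      have hs2 := BBaux.pickE_spec ((hx2.1 : x2 ∈ Rsupp R))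
      obtain ⟨v, u, hsvu, hvS, huS⟩ := hSone (BBaux.pickE R x1) hs1.1
      have hmem1 : x1 ∈ BBaux.pickE R x1 := hs1.2
      have hmem2 : x2 ∈ BBaux.pickE R x1 := by rw [heq]; exact hs2.2
      rw [hsvu, Sym2.mem_iff] at hmem1 hmem2
      have hx1u : x1 = u := by
        rcases hmem1 with h | h
        · exact absurd (h ▸ hvS) hx1.2
        · exact h
      have hx2u : x2 = u := by
        rcases hmem2 with h | h
        · exact absurd (h ▸ hvS) hx2.2
        · exact h
      rw [hx1u, hx2u]
    have hzinj : ∀ v1 ∈ S, ∀ v2 ∈ S, ∀ z : V, s(v1, z) ∈ M → s(v2, z) ∈ M → z ∉ S →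
        v1 = v2 := by
      intro v1 h1 v2 h2 z hm1 hm2 hzS
      by_cases heq : s(v1, z) = s(v2, z)
      · rw [Sym2.eq_iff] at heq
        rcases heq with ⟨h, _⟩ | ⟨h1', h2'⟩
        · exact h
        · exact absurd (h1' ▸ h1) hzS
      · exact absurd ⟨Sym2.mem_mk_right v1 z, Sym2.mem_mk_right v2 z⟩
          (hM.2 _ hm1 _ hm2 heq z)
    have hzsurj := Set.surj_on_of_inj_on_of_ncard_le (s := S) (t := Rsupp R \ S)
      (fun v hv => (hmatchS v hv).choose)
      (fun v hv => (hmatchS v hv).choose_spec.2)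
      (fun v1 v2 h1 h2 heq => by
        have heq' : (hmatchS v1 h1).choose = (hmatchS v2 h2).choose := heq
        refine hzinj v1 h1 v2 h2 (hmatchS v1 h1).choose (hmatchS v1 h1).choose_spec.1
          ?_ (hmatchS v1 h1).choose_spec.2.2
        rw [heq']
        exact (hmatchS v2 h2).choose_spec.1)
      hWSle (Set.toFinite _)
    have hM'PM : BBaux.IsPM A (Rsupp R) {e ∈ M | ∀ x ∈ e, x ∈ Rsupp R} := by
      refine ⟨fun e he => hM.1 he.1, fun e he f hf => hM.2 e he.1 f hf.1, fun x => ?_⟩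
      constructor
      · intro hxW
        by_cases hxS : x ∈ S
        · obtain ⟨hzM, hzW, hzS⟩ := (hmatchS x hxS).choose_spec
          refine ⟨s(x, (hmatchS x hxS).choose), ⟨hzM, ?_⟩, Sym2.mem_mk_left _ _⟩
          intro y hy
          rcases Sym2.mem_iff.mp hy with rfl | rfl
          · exact hSW hxS
          · exact hzW
        · obtain ⟨v, hv, hxz⟩ := hzsurj x ⟨hxW, hxS⟩
          have hxz' : x = (hmatchS v hv).choose := hxz
          obtain ⟨hzM, hzW, hzS⟩ := (hmatchS v hv).choose_spec
          refine ⟨s(v, (hmatchS v hv).choose), ⟨hzM, ?_⟩,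
            by rw [hxz']; exact Sym2.mem_mk_right _ _⟩
          intro y hy
          rcases Sym2.mem_iff.mp hy with rfl | rfl
          · exact hSW hv
          · exact hzW
      · rintro ⟨e, ⟨heM, hein⟩, hxe⟩
        exact hein x hxe
    have hReq : R = {e ∈ M | ∀ x ∈ e, x ∈ Rsupp R} :=
      BBaux.pm_unique hA (Rsupp R).ncard (Rsupp R) R _ le_rfl hPM hM'PM
    intro e heR
    have he2 : e ∈ {e ∈ M | ∀ x ∈ e, x ∈ Rsupp R} := hReq ▸ heR
    exact he2.1
  -- maximum matchings avoiding a given vertex of G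
  have hMavoid : ∀ g : V, ∃ Mg : Set (Sym2 V), IsMaxMatch A Mg ∧
      (g ∈ G → ∀ e ∈ Mg, g ∉ e) := by
    intro g
    obtain ⟨fg, hfginj, hfgspec⟩ := BBaux.hallBG hA B G hBG hdeg g B Set.Subset.rfl
    obtain ⟨hmatch, hcard⟩ := BBaux.build_match hRE hRpw hBW hGW hBG Set.Subset.rfl
      hfginj (fun b hb => ⟨(hfgspec b hb).1, (hfgspec b hb).2.1⟩)
    refine ⟨_, hmax_of_card _ hmatch hcard, ?_⟩
    intro hgG e he hge
    rcases he with he | he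
    · exact hGnotW g hgG ⟨e, he, hge⟩
    · obtain ⟨b, hb, rfl⟩ := he
      rcases Sym2.mem_iff.mp hge with h | h
      · exact hBnotG b hb (h ▸ hgG)
      · exact (hfgspec b hb).2.2 h.symm
  -- maximum matchings avoiding a given edge at a vertex of B
  have havoid : ∀ b ∈ B, ∀ x : V, ∃ M2 : Set (Sym2 V), IsMaxMatch A M2 ∧ s(b, x) ∉ M2 := by
    intro b hb x
    obtain ⟨y1, hy1, y2, hy2, hyne⟩ :=
      (Set.one_lt_ncard (Set.toFinite _)).mp (lt_of_lt_of_le one_lt_two (hdeg b hb))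
    have hg1 : ∃ g1, g1 ∈ A.neighborSet b ∩ G ∧ g1 ≠ x := by
      by_cases h : y1 = x
      · exact ⟨y2, hy2, fun hc => hyne (h.trans hc.symm)⟩
      · exact ⟨y1, hy1, h⟩
    obtain ⟨g1, ⟨hg1adj, hg1G⟩, hg1x⟩ := hg1
    obtain ⟨f', hf'inj, hf'spec⟩ := BBaux.hallBG hA B G hBG hdeg g1 (B \ {b})
      Set.diff_subset
    set F : V → V := fun c => if c = b then g1 else f' c with hF
    have hFval : ∀ c, c ≠ b → F c = f' c := by
      intro c hc
      rw [hF]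
      simp only [if_neg hc]
    have hFb : F b = g1 := by simp [hF]
    have hFinj : Set.InjOn F B := by
      intro c1 h1 c2 h2 heq
      by_cases e1 : c1 = b <;> by_cases e2 : c2 = b
      · rw [e1, e2]
      · rw [e1, hFb, hFval c2 e2] at heq
        exact absurd heq.symm (hf'spec c2 ⟨h2, e2⟩).2.2
      · rw [e2, hFb, hFval c1 e1] at heq
        exact absurd heq (hf'spec c1 ⟨h1, e1⟩).2.2
      · rw [hFval c1 e1, hFval c2 e2] at heq
        exact hf'inj ⟨h1, e1⟩ ⟨h2, e2⟩ heq
    have hFspec : ∀ c ∈ B, A.Adj c (F c) ∧ F c ∈ G := by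
      intro c hc
      by_cases e1 : c = b
      · subst e1
        rw [hFb]
        exact ⟨hg1adj, hg1G⟩
      · rw [hFval c e1]
        exact ⟨(hf'spec c ⟨hc, e1⟩).1, (hf'spec c ⟨hc, e1⟩).2.1⟩
    obtain ⟨hmatch, hcard⟩ := BBaux.build_match hRE hRpw hBW hGW hBG Set.Subset.rfl
      hFinj hFspec
    refine ⟨_, hmax_of_card _ hmatch hcard, ?_⟩
    intro hmem
    rcases hmem with h | h
    · exact hBnotW b hb ⟨_, h, Sym2.mem_mk_left _ _⟩
    · obtain ⟨c, hc, heqq⟩ := h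
      have heq' : s(c, F c) = s(b, x) := heqq
      rw [Sym2.eq_iff] at heq'
      rcases heq' with ⟨h1, h2⟩ | ⟨h1, h2⟩
      · rw [h1, hFb] at h2
        exact hg1x h2
      · exact hBnotG b hb (h2 ▸ (hFspec c hc).2)
  -- assemble
  refine ⟨?_, ?_, ?_⟩
  · ext v
    simp only [Set.mem_setOf_eq]
    constructor
    · rintro ⟨M, hMmax, hmiss⟩
      rcases htri v with hv | hv | hv
      · obtain ⟨e, heM, hve⟩ := (hexact M hMmax).1 v (Or.inl hv)
        exact absurd hve (hmiss e heM)
      · exact hv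
      · obtain ⟨e, heR, hve⟩ := hv
        exact absurd hve (hmiss e (hRin M hMmax heR))
    · intro hvG
      obtain ⟨Mg, hMgmax, hMgavoid⟩ := hMavoid v
      exact ⟨Mg, hMgmax, hMgavoid hvG⟩
  · ext v
    simp only [Set.mem_setOf_eq]
    constructor
    · rintro ⟨hall, hnofix⟩
      rcases htri v with hv | hv | hv
      · exact hv
      · obtain ⟨Mg, hMgmax, hMgavoid⟩ := hMavoid v
        obtain ⟨e, heM, hve⟩ := hall Mg hMgmax
        exact absurd hve (hMgavoid hv e heM)
      · obtain ⟨e, heR, hve⟩ := hv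
        exact absurd ⟨e, hRE heR, hve, fun M hM => hRin M hM heR⟩ hnofix
    · intro hvB
      refine ⟨fun M hM => (hexact M hM).1 v (Or.inl hvB), ?_⟩
      rintro ⟨e, heE, hve, hall⟩
      have hsx : s(v, Sym2.Mem.other' hve) = e := Sym2.other_spec' hve
      obtain ⟨M2, hM2max, hM2avoid⟩ := havoid v hvB (Sym2.Mem.other' hve)
      exact hM2avoid (by rw [hsx]; exact hall M2 hM2max)
  · ext e
    simp only [Set.mem_setOf_eq]
    constructor
    · rintro ⟨heE, hall⟩
      have heM0 : e ∈ M0 := hall M0 hM0max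
      rcases heM0 with h | h
      · exact h
      · obtain ⟨b, hb, rfl⟩ := h
        obtain ⟨M2, hM2max, hM2avoid⟩ := havoid b hb (f0 b)
        exact absurd (hall M2 hM2max) hM2avoid
    · intro heR
      exact ⟨hRE heR, fun M hM => hRin M hM heR⟩
end

section
/- In a finite tree, the dimension of the kernel of the adjacency matrix (over the rationals) equals |G| − |B|, where (B, R, G) is the b-coloring of the tree. -/
variable {V : Type*} [Fintype V] [DecidableEq V]

section Aux

open SimpleGraph Finset Module

set_option linter.unusedSectionVars false

private lemma edge_start_eq_snd {A : SimpleGraph V} {u v x : V} (p : A.Walk u v)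
    (hp : p.IsPath) (hx : x ≠ u) (he : s(x, u) ∈ p.edges) : x = p.getVert 1 := by
  cases p with
  | nil => simp at he
  | cons h q =>
    rename_i y
    rw [Walk.edges_cons, List.mem_cons] at he
    rcases he with he | he
    · rw [Sym2.eq_iff] at he
      rcases he with ⟨h1, h2⟩ | ⟨h1, h2⟩
      · exact absurd h1 hx
      · simpa [Walk.getVert_cons_succ] using h1
    · exfalso
      have := q.snd_mem_support_of_mem_edges he
      rw [Walk.cons_isPath_iff] at hp
      exact hp.2 this

lemma forest_exists_small_degree {A : SimpleGraph V} [DecidableRel A.Adj] (hG : A.IsAcyclic)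
    {S : Finset V} (hS : S.Nonempty) :
    ∃ v ∈ S, ((A.neighborFinset v) ∩ S).card ≤ 1 := by
  by_contra hcon
  push_neg at hcon
  set P : Set ℕ := {n | ∃ (u v : V) (p : A.Walk u v), p.IsPath ∧ (∀ x ∈ p.support, x ∈ S)
      ∧ p.length = n} with hP
  obtain ⟨v₀, hv₀⟩ := hS
  have hne : P.Nonempty := ⟨0, v₀, v₀, Walk.nil, by simp, by simpa using hv₀, rfl⟩
  have hbdd : BddAbove P := by
    refine ⟨Fintype.card V, ?_⟩
    rintro n ⟨u, v, p, hp, -, rfl⟩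
    exact le_of_lt hp.length_lt
  obtain ⟨u, v, p, hp, hsupp, hlen⟩ := Nat.sSup_mem hne hbdd
  have hu : u ∈ S := hsupp u p.start_mem_support
  have h2 : 1 < ((A.neighborFinset u) ∩ S).card := lt_of_lt_of_le one_lt_two (hcon u hu)
  obtain ⟨w, hw, hwd⟩ := Finset.exists_mem_ne h2 (p.getVert 1)
  rw [Finset.mem_inter, mem_neighborFinset] at hw
  obtain ⟨hadj, hwS⟩ := hw
  by_cases hws : w ∈ p.support
  · -- build a cycle
    have hwu : w ≠ u := hadj.ne'
    have hq : (p.takeUntil w hws).IsPath := hp.takeUntil hws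
    have hne : s(w, u) ∉ (p.takeUntil w hws).edges := by
      intro hmem
      exact hwd (edge_start_eq_snd p hp hwu (p.edges_takeUntil_subset hws hmem))
    have hc : (Walk.cons hadj.symm (p.takeUntil w hws)).IsCycle :=
      (Walk.cons_isCycle_iff _ _).2 ⟨hq, hne⟩
    exact hG _ hc
  · -- extend the path
    have hp' : (Walk.cons hadj.symm p).IsPath := hp.cons hws
    have hmem : p.length + 1 ∈ P := by
      refine ⟨w, v, Walk.cons hadj.symm p, hp', ?_, by simp⟩
      intro x hx
      rw [Walk.support_cons, List.mem_cons] at hx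
      rcases hx with rfl | hx
      · exact hwS
      · exact hsupp x hx
    have := le_csSup hbdd hmem
    omega

lemma forest_degree_sum {A : SimpleGraph V} [DecidableRel A.Adj] (hG : A.IsAcyclic)
    (S : Finset V) (hS : S.Nonempty) :
    (∑ v ∈ S, ((A.neighborFinset v) ∩ S).card) + 2 ≤ 2 * S.card := by
  induction S using Finset.strongInductionOn with
  | _ S IH =>
  obtain ⟨v, hv, hdeg⟩ := forest_exists_small_degree hG hS
  set S' := S.erase v with hS'
  have hsub : S' ⊂ S := Finset.erase_ssubset hv
  have hsum : ∑ w ∈ S', ((A.neighborFinset w) ∩ S).card + ((A.neighborFinset v) ∩ S).card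
      = ∑ w ∈ S, ((A.neighborFinset w) ∩ S).card := Finset.sum_erase_add S _ hv
  have hterm : ∀ w, ((A.neighborFinset w) ∩ S).card ≤
      ((A.neighborFinset w) ∩ S').card + if v ∈ A.neighborFinset w then 1 else 0 := by
    intro w
    by_cases hvw : v ∈ A.neighborFinset w
    · simp only [hvw, if_true]
      have : (A.neighborFinset w) ∩ S ⊆ insert v ((A.neighborFinset w) ∩ S') := by
        intro x hx
        rw [Finset.mem_inter] at hx
        rcases eq_or_ne x v with rfl | hxv
        · exact Finset.mem_insert_self _ _
        · exact Finset.mem_insert_of_mem (Finset.mem_inter.2 ⟨hx.1, Finset.mem_erase.2 ⟨hxv, hx.2⟩⟩)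
      calc ((A.neighborFinset w) ∩ S).card ≤ _ := Finset.card_le_card this
        _ ≤ _ := Finset.card_insert_le _ _
    · simp only [hvw, if_false, add_zero]
      refine Finset.card_le_card fun x hx => ?_
      rw [Finset.mem_inter] at hx ⊢
      refine ⟨hx.1, Finset.mem_erase.2 ⟨?_, hx.2⟩⟩
      rintro rfl
      exact hvw hx.1
  have hite : ∑ w ∈ S', (if v ∈ A.neighborFinset w then 1 else 0)
      = ((A.neighborFinset v) ∩ S').card := by
    rw [← Finset.card_filter]
    congr 1
    ext w
    simp only [Finset.mem_filter, Finset.mem_inter, mem_neighborFinset, adj_comm]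
    tauto
  have hNS' : ((A.neighborFinset v) ∩ S').card ≤ 1 := by
    refine le_trans (Finset.card_le_card ?_) hdeg
    exact Finset.inter_subset_inter le_rfl (Finset.erase_subset _ _)
  rcases S'.eq_empty_or_nonempty with hS'e | hS'ne
  · have hSv : S = {v} := by
      rw [hS'] at hS'e
      ext x
      simp only [Finset.mem_singleton]
      constructor
      · intro hx
        by_contra hne
        exact absurd (Finset.mem_erase.2 ⟨hne, hx⟩) (by rw [hS'e]; simp)
      · rintro rfl; exact hv
    subst hSv
    simp
  · have IH' := IH S' hsub hS'ne
    have h1 : ∑ w ∈ S', ((A.neighborFinset w) ∩ S).card ≤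
        (∑ w ∈ S', ((A.neighborFinset w) ∩ S').card) + 1 := by
      calc ∑ w ∈ S', ((A.neighborFinset w) ∩ S).card
          ≤ ∑ w ∈ S', (((A.neighborFinset w) ∩ S').card + if v ∈ A.neighborFinset w then 1 else 0) :=
            Finset.sum_le_sum fun w _ => hterm w
        _ = (∑ w ∈ S', ((A.neighborFinset w) ∩ S').card)
              + ∑ w ∈ S', (if v ∈ A.neighborFinset w then 1 else 0) := Finset.sum_add_distrib
        _ ≤ _ := by rw [hite]; exact Nat.add_le_add_left hNS' _
    have hcard : S.card = S'.card + 1 := by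
      rw [hS', Finset.card_erase_of_mem hv]
      have : 1 ≤ S.card := Finset.card_pos.2 hS
      omega
    omega

lemma forest_hall_cond {A : SimpleGraph V} [DecidableRel A.Adj] (hG : A.IsAcyclic)
    {Bf Gf : Finset V} (hdisj : Disjoint Bf Gf)
    (hdeg : ∀ b ∈ Bf, 2 ≤ (A.neighborFinset b ∩ Gf).card) :
    ∀ s ⊆ Bf, s.card ≤ (s.biUnion (fun b => A.neighborFinset b ∩ Gf)).card := by
  intro s hsB
  rcases s.eq_empty_or_nonempty with rfl | hsne
  · simp
  set N := s.biUnion (fun b => A.neighborFinset b ∩ Gf) with hN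
  have hNG : N ⊆ Gf := by
    intro g hg
    rw [hN, Finset.mem_biUnion] at hg
    obtain ⟨b, _, hb⟩ := hg
    exact (Finset.mem_inter.1 hb).2
  have hdisj' : Disjoint s N := Finset.disjoint_of_subset_left hsB
    (Finset.disjoint_of_subset_right hNG hdisj)
  set T := s ∪ N with hT
  have hTsum := forest_degree_sum hG T (Finset.Nonempty.inl hsne)
  -- double counting
  have hdc : ∀ (X Y : Finset V), ∑ a ∈ X, ((A.neighborFinset a) ∩ Y).card
      = ∑ b ∈ Y, ((A.neighborFinset b) ∩ X).card := by
    intro X Y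
    have key : ∀ (X Y : Finset V), ∑ a ∈ X, ((A.neighborFinset a) ∩ Y).card
        = ∑ a ∈ X, ∑ b ∈ Y, if A.Adj a b then 1 else 0 := by
      intro X Y
      refine Finset.sum_congr rfl fun a _ => ?_
      rw [← Finset.card_filter]
      congr 1
      ext b
      simp [Finset.mem_inter, mem_neighborFinset, and_comm]
    rw [key, key, Finset.sum_comm]
    refine Finset.sum_congr rfl fun a _ => Finset.sum_congr rfl fun b _ => ?_
    simp only [adj_comm]
  have hsplit : ∑ v ∈ T, ((A.neighborFinset v) ∩ T).card
      = ∑ v ∈ s, ((A.neighborFinset v) ∩ T).card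
        + ∑ g ∈ N, ((A.neighborFinset g) ∩ T).card := Finset.sum_union hdisj'
  have hb1 : ∀ v ∈ s, ((A.neighborFinset v) ∩ Gf).card ≤ ((A.neighborFinset v) ∩ T).card := by
    intro v hv
    refine Finset.card_le_card fun x hx => ?_
    rw [Finset.mem_inter] at hx
    refine Finset.mem_inter.2 ⟨hx.1, Finset.mem_union_right _ ?_⟩
    rw [hN, Finset.mem_biUnion]
    exact ⟨v, hv, Finset.mem_inter.2 hx⟩
  have hb2 : ∀ g ∈ N, ((A.neighborFinset g) ∩ s).card ≤ ((A.neighborFinset g) ∩ T).card :=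
    fun g _ => Finset.card_le_card (Finset.inter_subset_inter le_rfl Finset.subset_union_left)
  have hlow : 2 * ∑ v ∈ s, ((A.neighborFinset v) ∩ Gf).card
      ≤ ∑ v ∈ T, ((A.neighborFinset v) ∩ T).card := by
    rw [hsplit, two_mul]
    refine Nat.add_le_add (Finset.sum_le_sum hb1) ?_
    calc ∑ v ∈ s, ((A.neighborFinset v) ∩ Gf).card
        ≤ ∑ v ∈ s, ((A.neighborFinset v) ∩ N).card := by
          refine Finset.sum_le_sum fun v hv => Finset.card_le_card fun x hx => ?_
          rw [Finset.mem_inter] at hx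
          refine Finset.mem_inter.2 ⟨hx.1, ?_⟩
          rw [hN, Finset.mem_biUnion]
          exact ⟨v, hv, Finset.mem_inter.2 hx⟩
      _ = ∑ g ∈ N, ((A.neighborFinset g) ∩ s).card := hdc s N
      _ ≤ _ := Finset.sum_le_sum hb2
  have hds : 2 * s.card ≤ ∑ v ∈ s, ((A.neighborFinset v) ∩ Gf).card := by
    calc 2 * s.card = ∑ _v ∈ s, 2 := by rw [Finset.sum_const, smul_eq_mul, mul_comm]
      _ ≤ _ := Finset.sum_le_sum fun v hv => hdeg v (hsB hv)
  have hcT : T.card = s.card + N.card := Finset.card_union_of_disjoint hdisj'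
  omega

lemma forest_matching_ker {A : SimpleGraph V} [DecidableRel A.Adj] (hG : A.IsAcyclic) (m : V → V) :
    ∀ (S : Finset V), (∀ v ∈ S, m v ∈ S ∧ A.Adj v (m v) ∧ m (m v) = v) →
    ∀ x : V → ℚ, (∀ v ∈ S, ∑ w ∈ S, (if A.Adj v w then x w else 0) = 0) →
    ∀ v ∈ S, x v = 0 := by
  intro S
  induction S using Finset.strongInductionOn with
  | _ S IH =>
  intro hm x hx
  rcases S.eq_empty_or_nonempty with rfl | hSne
  · simp
  obtain ⟨v, hvS, hdeg⟩ := forest_exists_small_degree hG hSne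
  obtain ⟨huS, huv, hmu⟩ := hm v hvS
  set u := m v with hu
  have hvu : v ≠ u := huv.ne
  -- the unique S-neighbor of v is u
  have hNv : (A.neighborFinset v) ∩ S = {u} := by
    have husub : {u} ⊆ (A.neighborFinset v) ∩ S :=
      Finset.singleton_subset_iff.2 (Finset.mem_inter.2 ⟨(mem_neighborFinset _ _ _).2 huv, huS⟩)
    exact (Finset.eq_of_subset_of_card_le husub (le_trans hdeg (by simp))).symm
  have hfilter : S.filter (fun w => A.Adj v w) = {u} := by
    rw [← hNv]; ext w; simp [mem_neighborFinset, and_comm]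
  -- row at v gives x u = 0
  have hxu : x u = 0 := by
    have h0 := hx v hvS
    rwa [← Finset.sum_filter, hfilter, Finset.sum_singleton] at h0
  have hnadj : ∀ w ∈ S, w ≠ u → ¬ A.Adj w v := by
    intro w hwS hwu hadj
    apply hwu
    have : w ∈ (A.neighborFinset v) ∩ S :=
      Finset.mem_inter.2 ⟨(mem_neighborFinset _ _ _).2 hadj.symm, hwS⟩
    rwa [hNv, Finset.mem_singleton] at this
  set S' := (S.erase v).erase u with hS'
  have huev : u ∈ S.erase v := Finset.mem_erase.2 ⟨(Ne.symm hvu), huS⟩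
  have hmemS' : ∀ w, w ∈ S' ↔ w ∈ S ∧ w ≠ v ∧ w ≠ u := by
    intro w; rw [hS']; simp only [Finset.mem_erase]; tauto
  have hsub : S' ⊂ S :=
    lt_of_le_of_lt (Finset.erase_subset _ _) (Finset.erase_ssubset hvS)
  -- m restricts to S'
  have hm' : ∀ w ∈ S', m w ∈ S' ∧ A.Adj w (m w) ∧ m (m w) = w := by
    intro w hw
    rw [hmemS'] at hw
    obtain ⟨hwS, hwv, hwu⟩ := hw
    obtain ⟨h1, h2, h3⟩ := hm w hwS
    refine ⟨(hmemS' _).2 ⟨h1, ?_, ?_⟩, h2, h3⟩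
    · rintro h; apply hwu; rw [← h3, h, ← hu]
    · rintro h; apply hwv; rw [← h3, h, hmu]
  -- rows restrict to S'
  have hx' : ∀ w ∈ S', ∑ z ∈ S', (if A.Adj w z then x z else 0) = 0 := by
    intro w hw
    have hwmem := (hmemS' w).1 hw
    obtain ⟨hwS, hwv, hwu⟩ := hwmem
    have h0 := hx w hwS
    rw [← Finset.sum_erase_add S _ hvS, ← Finset.sum_erase_add (S.erase v) _ huev] at h0
    have e1 : (if A.Adj w u then x u else 0) = 0 := by rw [hxu]; simp
    have e2 : (if A.Adj w v then x v else 0) = 0 := by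
      rw [if_neg (hnadj w hwS hwu)]
    rw [e1, e2, add_zero, add_zero] at h0
    exact h0
  have hIH := IH S' hsub hm' x hx'
  -- x vanishes on S.erase v
  have hxev : ∀ w ∈ S.erase v, x w = 0 := by
    intro w hw
    rcases eq_or_ne w u with rfl | hwu
    · exact hxu
    · exact hIH w ((hmemS' w).2 ⟨(Finset.mem_erase.1 hw).2, (Finset.mem_erase.1 hw).1, hwu⟩)
  -- row at u gives x v = 0
  have hxv : x v = 0 := by
    have h0 := hx u huS
    rw [← Finset.sum_erase_add S _ hvS] at h0
    have e1 : ∑ z ∈ S.erase v, (if A.Adj u z then x z else 0) = 0 := by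
      refine Finset.sum_eq_zero fun z hz => ?_
      rw [hxev z hz]; simp
    rw [e1, zero_add, if_pos huv.symm] at h0
    exact h0
  intro w hwS
  rcases eq_or_ne w v with rfl | hwv
  · exact hxv
  · exact hxev w (Finset.mem_erase.2 ⟨hwv, hwS⟩)

open scoped Classical in
noncomputable def extendByZero (G : Set V) : (↥G → ℚ) →ₗ[ℚ] (V → ℚ) where
  toFun y v := if h : v ∈ G then y ⟨v, h⟩ else 0
  map_add' y z := by funext v; by_cases h : v ∈ G <;> simp [h]
  map_smul' c y := by funext v; by_cases h : v ∈ G <;> simp [h]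

lemma ncard_lower_bound (A : SimpleGraph V) [DecidableRel A.Adj] (B G : Set V)
    (hGadj : ∀ v w : V, A.Adj v w → v ∈ G → w ∈ B) :
    G.ncard ≤ Module.finrank ℚ (LinearMap.ker (Matrix.toLin' (A.adjMatrix ℚ))) + B.ncard := by
  classical
  set T := Matrix.toLin' (A.adjMatrix ℚ) with hT
  set Ψ := extendByZero (V := V) G with hΨ
  have hΨapp : ∀ (y : ↥G → ℚ) (v : V), Ψ y v = if h : v ∈ G then y ⟨v, h⟩ else 0 := by
    intro y v
    rw [hΨ]
    simp only [extendByZero, LinearMap.coe_mk, AddHom.coe_mk]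
  set ℓ : (↥G → ℚ) →ₗ[ℚ] (↥B → ℚ) :=
    (LinearMap.funLeft ℚ ℚ (fun b : ↥B => (b : V))) ∘ₗ T ∘ₗ Ψ with hℓ
  have hker : ∀ y ∈ LinearMap.ker ℓ, Ψ y ∈ LinearMap.ker T := by
    intro y hy
    rw [LinearMap.mem_ker] at hy ⊢
    funext v
    by_cases hvB : v ∈ B
    · have := congrFun hy ⟨v, hvB⟩
      simpa [hℓ, LinearMap.funLeft] using this
    · rw [hT]
      simp only [Matrix.toLin'_apply, Matrix.mulVec, dotProduct, Pi.zero_apply]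
      refine Finset.sum_eq_zero fun w _ => ?_
      by_cases hadj : A.Adj v w
      · have hwG : w ∉ G := fun hwG => hvB (hGadj w v hadj.symm hwG)
        rw [hΨapp, dif_neg hwG, mul_zero]
      · simp [adjMatrix_apply, hadj]
  have hΨinj : Function.Injective Ψ := by
    intro y z hyz
    funext b
    have := congrFun hyz b.1
    rwa [hΨapp, hΨapp, dif_pos b.2, dif_pos b.2] at this
  set F : LinearMap.ker ℓ →ₗ[ℚ] (V → ℚ) := Ψ ∘ₗ (Submodule.subtype _) with hF
  have hFmem : ∀ z : LinearMap.ker ℓ, F z ∈ LinearMap.ker T := fun z => hker z.1 z.2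
  set Φ := LinearMap.codRestrict (LinearMap.ker T) F hFmem with hΦ
  have hΦinj : Function.Injective Φ := by
    intro a b hab
    have : F a = F b := congrArg Subtype.val hab
    exact Subtype.ext (hΨinj (by simpa [hF] using this))
  have h1 : finrank ℚ (LinearMap.ker ℓ) ≤ finrank ℚ (LinearMap.ker T) :=
    LinearMap.finrank_le_finrank_of_injective hΦinj
  have h2 := LinearMap.finrank_range_add_finrank_ker ℓ
  have h3 : finrank ℚ (↥G → ℚ) = G.ncard := by
    rw [Module.finrank_pi, Set.ncard_eq_toFinset_card', Set.toFinset_card]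
  have h4 : finrank ℚ (LinearMap.range ℓ) ≤ B.ncard := by
    calc finrank ℚ (LinearMap.range ℓ) ≤ finrank ℚ (↥B → ℚ) := Submodule.finrank_le _
      _ = B.ncard := by rw [Module.finrank_pi, Set.ncard_eq_toFinset_card', Set.toFinset_card]
  omega

lemma ncard_upper_bound (A : SimpleGraph V) [DecidableRel A.Adj] (hAc : A.IsAcyclic)
    (B : Set V) (R : Set (Sym2 V)) (G : Set V)
    (hRE : R ⊆ A.edgeSet) (hUniv : B ∪ G ∪ Rsupp R = Set.univ)
    (hBG : Disjoint B G) (hBR : Disjoint B (Rsupp R)) (hGR : Disjoint G (Rsupp R))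
    (hRmatch : ∀ e ∈ R, ∀ f ∈ R, e ≠ f → ∀ v : V, ¬(v ∈ e ∧ v ∈ f)) :
    (∀ b ∈ B, 2 ≤ (A.neighborSet b ∩ G).ncard) →
    Module.finrank ℚ (LinearMap.ker (Matrix.toLin' (A.adjMatrix ℚ))) + B.ncard ≤ G.ncard := by
  classical
  intro hBdeg
  set T := Matrix.toLin' (A.adjMatrix ℚ) with hT
  set Bf := B.toFinset with hBf
  set Gf := G.toFinset with hGf
  set Rf := (Rsupp R).toFinset with hRf
  have hmemB : ∀ v, v ∈ Bf ↔ v ∈ B := fun v => Set.mem_toFinset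
  have hmemG : ∀ v, v ∈ Gf ↔ v ∈ G := fun v => Set.mem_toFinset
  have hmemR : ∀ v, v ∈ Rf ↔ v ∈ Rsupp R := fun v => Set.mem_toFinset
  -- Hall
  have hdisjBG : Disjoint Bf Gf := by
    rw [Finset.disjoint_left]
    intro a ha hg
    exact Set.disjoint_left.1 hBG ((hmemB a).1 ha) ((hmemG a).1 hg)
  have hdeg : ∀ b ∈ Bf, 2 ≤ (A.neighborFinset b ∩ Gf).card := by
    intro b hb
    have hset : A.neighborSet b ∩ G = ↑(A.neighborFinset b ∩ Gf) := by
      ext x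
      simp only [Set.mem_inter_iff, mem_neighborSet, Finset.coe_inter, Set.mem_inter_iff,
        Finset.mem_coe, mem_neighborFinset, hmemG]
    have h2 := hBdeg b ((hmemB b).1 hb)
    rwa [hset, Set.ncard_coe_finset] at h2
  have hhall : ∀ s : Finset ↥Bf, s.card ≤ (s.biUnion (fun b => A.neighborFinset b.1 ∩ Gf)).card := by
    intro s
    have h1 : (s.image Subtype.val) ⊆ Bf := by
      intro x hx
      obtain ⟨y, -, rfl⟩ := Finset.mem_image.1 hx
      exact y.2
    have h2 := forest_hall_cond hAc hdisjBG hdeg _ h1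
    rwa [Finset.image_biUnion, Finset.card_image_of_injective _ Subtype.val_injective] at h2
  obtain ⟨f, hfinj, hft⟩ :=
    (Finset.all_card_le_biUnion_card_iff_exists_injective
      (fun b : ↥Bf => A.neighborFinset b.1 ∩ Gf)).1 hhall
  have hfadj : ∀ b : ↥Bf, A.Adj b.1 (f b) := fun b =>
    (mem_neighborFinset _ _ _).1 (Finset.mem_inter.1 (hft b)).1
  have hfG : ∀ b : ↥Bf, f b ∈ G := fun b => (hmemG _).1 (Finset.mem_inter.1 (hft b)).2
  set If : Finset V := Finset.univ.image (fun b : ↥Bf => f b) with hIf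
  set Sm : Finset V := Rf ∪ Bf ∪ If with hSm
  -- the pairing
  set m : V → V := fun v =>
    if h : ∃ b : ↥Bf, f b = v then (h.choose : V)
    else if hb : v ∈ Bf then f ⟨v, hb⟩
    else if hr : ∃ e ∈ R, v ∈ e then Sym2.Mem.other hr.choose_spec.2
    else v with hm_def
  have hnotfB : ∀ v ∈ B, ¬∃ b : ↥Bf, f b = v := by
    rintro v hv ⟨b, rfl⟩
    exact Set.disjoint_left.1 hBG hv (hfG b)
  have hnotfR : ∀ v ∈ Rsupp R, ¬∃ b : ↥Bf, f b = v := by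
    rintro v hv ⟨b, rfl⟩
    exact Set.disjoint_left.1 hGR (hfG b) hv
  have hmf : ∀ b : ↥Bf, m (f b) = b.1 := by
    intro b
    have hex : ∃ b' : ↥Bf, f b' = f b := ⟨b, rfl⟩
    simp only [hm_def]
    rw [dif_pos hex]
    exact congrArg Subtype.val (hfinj hex.choose_spec)
  have hmB : ∀ v (hv : v ∈ Bf), m v = f ⟨v, hv⟩ := by
    intro v hv
    simp only [hm_def]
    rw [dif_neg (hnotfB v ((hmemB v).1 hv)), dif_pos hv]
  have hmR : ∀ v (hv : v ∈ Rsupp R),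
      A.Adj v (m v) ∧ m v ∈ Rsupp R ∧ s(v, m v) ∈ R := by
    intro v hv
    have hr : ∃ e ∈ R, v ∈ e := hv
    have hvnB : v ∉ Bf := fun h => Set.disjoint_left.1 hBR ((hmemB v).1 h) hv
    have hmv : m v = Sym2.Mem.other hr.choose_spec.2 := by
      simp only [hm_def]
      rw [dif_neg (hnotfR v hv), dif_neg hvnB, dif_pos hr]
    have hspec : s(v, m v) = hr.choose := by rw [hmv]; exact Sym2.other_spec _
    have heR : hr.choose ∈ R := hr.choose_spec.1
    have hmve : m v ∈ hr.choose := by rw [hmv]; exact Sym2.other_mem _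
    have hsR : s(v, m v) ∈ R := by rw [hspec]; exact heR
    refine ⟨?_, ⟨hr.choose, heR, hmve⟩, hsR⟩
    have := hRE hsR
    rwa [mem_edgeSet] at this
  have hmRinv : ∀ v (hv : v ∈ Rsupp R), m (m v) = v := by
    intro v hv
    obtain ⟨hadj, hmvR, hsR⟩ := hmR v hv
    have hr2 : ∃ e ∈ R, m v ∈ e := hmvR
    have hmvnB : m v ∉ Bf := fun h => Set.disjoint_left.1 hBR ((hmemB _).1 h) hmvR
    have hmm : m (m v) = Sym2.Mem.other hr2.choose_spec.2 := by
      simp only [hm_def]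
      rw [dif_neg (hnotfR _ hmvR), dif_neg hmvnB, dif_pos hr2]
    have he2 : hr2.choose = s(v, m v) := by
      by_contra hne
      exact hRmatch _ hr2.choose_spec.1 _ hsR hne (m v) ⟨hr2.choose_spec.2, by simp⟩
    have hspec2 : s(m v, m (m v)) = hr2.choose := by rw [hmm]; exact Sym2.other_spec _
    rw [he2] at hspec2
    rw [Sym2.eq_iff] at hspec2
    rcases hspec2 with ⟨h1, h2⟩ | ⟨h1, h2⟩
    · exact absurd h1.symm hadj.ne
    · exact h2
  -- m is an adjacent involution on Sm
  have hIfsub : ∀ v ∈ If, ∃ b : ↥Bf, f b = v := by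
    intro v hv
    obtain ⟨b, -, rfl⟩ := Finset.mem_image.1 hv
    exact ⟨b, rfl⟩
  have hm : ∀ v ∈ Sm, m v ∈ Sm ∧ A.Adj v (m v) ∧ m (m v) = v := by
    intro v hv
    rw [hSm, Finset.mem_union, Finset.mem_union] at hv
    rcases hv with (hv | hv) | hv
    · -- v ∈ Rf
      have hv' := (hmemR v).1 hv
      obtain ⟨hadj, hmvR, -⟩ := hmR v hv'
      refine ⟨?_, hadj, hmRinv v hv'⟩
      rw [hSm]
      exact Finset.mem_union_left _ (Finset.mem_union_left _ ((hmemR _).2 hmvR))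
    · -- v ∈ Bf
      have hmv := hmB v hv
      refine ⟨?_, ?_, ?_⟩
      · rw [hSm, hmv]
        exact Finset.mem_union_right _ (Finset.mem_image.2 ⟨⟨v, hv⟩, Finset.mem_univ _, rfl⟩)
      · rw [hmv]; exact hfadj ⟨v, hv⟩
      · rw [hmv, hmf]
    · -- v ∈ If
      obtain ⟨b, rfl⟩ := hIfsub v hv
      rw [hmf]
      refine ⟨?_, (hfadj b).symm, ?_⟩
      · rw [hSm]
        exact Finset.mem_union_left _ (Finset.mem_union_right _ b.2)
      · rw [hmB b.1 b.2]
  -- restriction to the complement is injective on the kernel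
  set ρ : LinearMap.ker T →ₗ[ℚ] (↥(Smᶜ) → ℚ) :=
    (LinearMap.funLeft ℚ ℚ (fun w : ↥(Smᶜ) => (w : V))) ∘ₗ (Submodule.subtype _) with hρ
  have hρinj : Function.Injective ρ := by
    rw [injective_iff_map_eq_zero]
    intro x hx
    have hout : ∀ w, w ∉ Sm → x.1 w = 0 := by
      intro w hw
      have := congrFun hx ⟨w, Finset.mem_compl.2 hw⟩
      simpa [hρ, LinearMap.funLeft] using this
    have hrows : ∀ v ∈ Sm, ∑ w ∈ Sm, (if A.Adj v w then x.1 w else 0) = 0 := by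
      intro v hv
      have h00 : (Matrix.toLin' (A.adjMatrix ℚ)) x.1 v = (0 : V → ℚ) v := congrFun x.2 v
      rw [Matrix.toLin'_apply, adjMatrix_mulVec_apply] at h00
      have h0 : ∑ u ∈ A.neighborFinset v, x.1 u = 0 := by simpa using h00
      have hfil : Sm.filter (fun w => A.Adj v w) = A.neighborFinset v ∩ Sm := by
        ext w; simp [mem_neighborFinset, and_comm]
      rw [← Finset.sum_filter, hfil]
      have hdiff : ∑ u ∈ A.neighborFinset v \ Sm, x.1 u = 0 :=
        Finset.sum_eq_zero fun u hu => hout u (Finset.mem_sdiff.1 hu).2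
      have hsplit := Finset.sum_inter_add_sum_sdiff (A.neighborFinset v) Sm x.1
      rw [hdiff, add_zero, h0] at hsplit
      exact hsplit
    have hzero := forest_matching_ker hAc m Sm hm x.1 hrows
    have : x.1 = 0 := by
      funext v
      by_cases hv : v ∈ Sm
      · exact hzero v hv
      · exact hout v hv
    exact Subtype.ext this
  have hk : finrank ℚ (LinearMap.ker T) ≤ Fintype.card V - Sm.card := by
    have h1 : finrank ℚ (LinearMap.ker T) ≤ finrank ℚ (↥(Smᶜ) → ℚ) :=
      LinearMap.finrank_le_finrank_of_injective hρinj
    rwa [Module.finrank_pi, Fintype.card_coe, Finset.card_compl] at h1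
  -- cardinalities
  have hIfcard : If.card = Bf.card := by
    rw [hIf, Finset.card_image_of_injective _ hfinj, Finset.card_univ, Fintype.card_coe]
  have hIfG : If ⊆ Gf := by
    intro v hv
    obtain ⟨b, rfl⟩ := hIfsub v hv
    exact (hmemG _).2 (hfG b)
  have hdisjRB : Disjoint Rf Bf := by
    rw [Finset.disjoint_left]
    intro a ha hb
    exact Set.disjoint_left.1 hBR ((hmemB a).1 hb) ((hmemR a).1 ha)
  have hdisjRBIf : Disjoint (Rf ∪ Bf) If := by
    rw [Finset.disjoint_left]
    intro a ha hif
    have haG := (hmemG a).1 (hIfG hif)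
    rw [Finset.mem_union] at ha
    rcases ha with ha | ha
    · exact Set.disjoint_left.1 hGR haG ((hmemR a).1 ha)
    · exact Set.disjoint_left.1 hBG ((hmemB a).1 ha) haG
  have hSmcard : Sm.card = Rf.card + Bf.card + Bf.card := by
    rw [hSm, Finset.card_union_of_disjoint hdisjRBIf, Finset.card_union_of_disjoint hdisjRB,
      hIfcard]
  have hdisjGfRf : Disjoint Gf Rf := by
    rw [Finset.disjoint_left]
    intro a ha hr
    exact Set.disjoint_left.1 hGR ((hmemG a).1 ha) ((hmemR a).1 hr)
  have hdisjBfGR : Disjoint Bf (Gf ∪ Rf) := by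
    rw [Finset.disjoint_left]
    intro a ha hgr
    rw [Finset.mem_union] at hgr
    rcases hgr with h | h
    · exact Set.disjoint_left.1 hBG ((hmemB a).1 ha) ((hmemG a).1 h)
    · exact Set.disjoint_left.1 hBR ((hmemB a).1 ha) ((hmemR a).1 h)
  have huniv : (Finset.univ : Finset V) = Bf ∪ (Gf ∪ Rf) := by
    ext v
    have := Set.ext_iff.1 hUniv v
    simp only [Set.mem_union, Set.mem_univ, iff_true] at this
    simp only [Finset.mem_univ, true_iff, Finset.mem_union, hmemB, hmemG, hmemR]
    tauto
  have hn : Fintype.card V = Bf.card + (Gf.card + Rf.card) := by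
    rw [← Finset.card_univ, huniv, Finset.card_union_of_disjoint hdisjBfGR,
      Finset.card_union_of_disjoint hdisjGfRf]
  have hSmle : Sm.card ≤ Fintype.card V := by
    rw [← Finset.card_univ]
    exact Finset.card_le_card (Finset.subset_univ _)
  have hBn : B.ncard = Bf.card := Set.ncard_eq_toFinset_card' B
  have hGn : G.ncard = Gf.card := Set.ncard_eq_toFinset_card' G
  rw [hBn, hGn]
  omega

end Aux

theorem kernel_dim_eq (A : SimpleGraph V) [DecidableRel A.Adj] (hA : A.IsTree)
    (B : Set V) (R : Set (Sym2 V)) (G : Set V) (hBC : IsBColoring A B R G) :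
    (Module.finrank ℚ (LinearMap.ker (Matrix.toLin' (A.adjMatrix ℚ))) : ℤ)
      = (G.ncard : ℤ) - B.ncard := by
  classical
  obtain ⟨hRE, hUniv, hBG, hBR, hGR, hRmatch, hGadj, hBdeg⟩ := hBC
  have hlow := ncard_lower_bound A B G hGadj
  have hup := ncard_upper_bound A hA.2 B R G hRE hUniv hBG hBR hGR hRmatch hBdeg
  omega
end
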